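/- arXiv:1807.02266 — 5 statements merged into one kernel-verified Lean document; each statement's English description precedes it below -/
import Mathlib

section
/- Let W be an n'-dimensional real inner product space and let E and F be linear subspaces of W with dim E = p and dim F = k. Set m := min{k, n'−k, p, n'−p}. Then there exist an orthonormal basis e_1, …, e_p of E, an orthonormal basis f_1, …, f_k of F, and real angles π/2 ≥ θ_1 ≥ θ_2 ≥ … ≥ θ_m ≥ 0 such that: (1) ⟨e_i, f_j⟩ = 0 for all i ≠ j; (2) ⟨e_i, f_i⟩ = cos θ_i for 1 ≤ i ≤ m; (3) ⟨e_i, f_i⟩ = 1 for m+1 ≤ i ≤ min{k, p}. -/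
open Real
open Module Submodule

/-- `m = min {k, n'-k, p, n'-p}`, the number of Jordan angles between a `p`-dimensional
and a `k`-dimensional subspace of an `n'`-dimensional euclidean space. -/
abbrev jordanDim (n' p k : ℕ) : ℕ := min (min k (n' - k)) (min p (n' - p))

/-- A Jordan system for the pair of subspaces `(E, F)`: orthonormal bases `e` of `E` and
`f` of `F` together with nonincreasing angles `θ` in `[0, π/2]` such that
`⟪e i, f j⟫ = 0` for `i ≠ j`, `⟪e i, f i⟫ = cos (θ i)` for `i < m`, and
`⟪e i, f i⟫ = 1` for `m ≤ i < min k p`. -/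
def IsJordanSystem {W : Type*} [NormedAddCommGroup W] [InnerProductSpace ℝ W]
    (n' p k : ℕ) (E F : Submodule ℝ W)
    (e : Fin p → W) (f : Fin k → W) (θ : Fin (jordanDim n' p k) → ℝ) : Prop :=
  Orthonormal ℝ e ∧ Submodule.span ℝ (Set.range e) = E ∧
  Orthonormal ℝ f ∧ Submodule.span ℝ (Set.range f) = F ∧
  (∀ i, 0 ≤ θ i ∧ θ i ≤ π / 2) ∧
  (∀ i j, i ≤ j → θ j ≤ θ i) ∧
  (∀ (i : Fin p) (j : Fin k), (i : ℕ) ≠ (j : ℕ) → inner ℝ (e i) (f j) = (0 : ℝ)) ∧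
  (∀ i : Fin (jordanDim n' p k),
    inner ℝ (e ⟨i, i.isLt.trans_le ((min_le_right _ _).trans (min_le_left _ _))⟩)
          (f ⟨i, i.isLt.trans_le ((min_le_left _ _).trans (min_le_left _ _))⟩)
      = Real.cos (θ i)) ∧
  (∀ (i : ℕ) (hip : i < p) (hik : i < k), jordanDim n' p k ≤ i →
    inner ℝ (e ⟨i, hip⟩) (f ⟨i, hik⟩) = (1 : ℝ))

section JordanHelpers
private def jrho (t d i : ℕ) : ℕ :=
  if i < t - d then t - 1 - i else if i < t then i - (t - d) else i

private lemma jrho_lt {t d i n : ℕ} (ht : t ≤ n) (hi : i < n) : jrho t d i < n := by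
  unfold jrho; split_ifs <;> omega

private lemma jrho_inj (t d : ℕ) (hd : d ≤ t) : Function.Injective (jrho t d) := by
  intro i j h; unfold jrho at h; split_ifs at h <;> omega

private lemma jrho_eq_lo {t d i : ℕ} (h : i < t - d) : jrho t d i = t - 1 - i := if_pos h

private lemma jrho_eq_hi {t d i : ℕ} (h1 : ¬ i < t - d) (h2 : i < t) :
    jrho t d i = i - (t - d) := by unfold jrho; rw [if_neg h1, if_pos h2]

private lemma jrho_lt_t {t d i : ℕ} (hi : i < t) : jrho t d i < t :=
  jrho_lt le_rfl hi

variable {W : Type*} [NormedAddCommGroup W] [InnerProductSpace ℝ W] [FiniteDimensional ℝ W]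

/-- an orthonormal basis of a submodule, as a family in the ambient space -/
private lemma exists_onb (F : Submodule ℝ W) (k : ℕ) (hF : finrank ℝ F = k) :
    ∃ f : Fin k → W, Orthonormal ℝ f ∧ Submodule.span ℝ (Set.range f) = F := by
  let b := (stdOrthonormalBasis ℝ F).reindex (finCongr hF)
  refine ⟨fun i => (b i : W), ?_, ?_⟩
  · exact (F.subtypeₗᵢ.orthonormal_comp_iff (v := fun i => b i)).mpr b.orthonormal
  · have : Set.range (fun i => (b i : W)) = F.subtype '' Set.range (b : Fin k → F) := by
      rw [← Set.range_comp]; rfl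
    rw [this, ← Submodule.map_span]
    rw [show Set.range (b : Fin k → F) = Set.range ⇑b.toBasis by rw [b.coe_toBasis], b.toBasis.span_eq]
    · simp

local notation "⟪" x ", " y "⟫" => @inner ℝ _ _ x y

/-- splitting off a unit vector -/
private lemma split_off (E : Submodule ℝ W) (a : W) (haE : a ∈ E) (ha : ‖a‖ = 1) :
    (ℝ ∙ a) ⊔ (E ⊓ (ℝ ∙ a)ᗮ) = E ∧ finrank ℝ ↥(E ⊓ (ℝ ∙ a)ᗮ) + 1 = finrank ℝ E := by
  have ha0 : a ≠ 0 := by intro h; rw [h, norm_zero] at ha; norm_num at ha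
  have hsup : (ℝ ∙ a) ⊔ (E ⊓ (ℝ ∙ a)ᗮ) = E := by
    apply le_antisymm
    · exact sup_le ((Submodule.span_singleton_le_iff_mem a E).mpr haE) inf_le_left
    · intro x hx
      have hdecomp : x = ⟪a, x⟫ • a + (x - ⟪a, x⟫ • a) := by abel
      rw [hdecomp]
      apply Submodule.add_mem_sup (Submodule.smul_mem _ _ (Submodule.mem_span_singleton_self a))
      refine Submodule.mem_inf.mpr ⟨Submodule.sub_mem E hx (Submodule.smul_mem _ _ haE), ?_⟩
      rw [Submodule.mem_orthogonal_singleton_iff_inner_right, inner_sub_right,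
        real_inner_smul_right, real_inner_self_eq_norm_sq, ha]
      ring
  have hinf : (ℝ ∙ a) ⊓ (E ⊓ (ℝ ∙ a)ᗮ) = ⊥ := by
    rw [← le_bot_iff]
    intro x hx
    simp only [Submodule.mem_inf] at hx
    exact (Submodule.orthogonal_disjoint (ℝ ∙ a)).le_bot ⟨hx.1, hx.2.2⟩
  have := Submodule.finrank_sup_add_finrank_inf_eq (ℝ ∙ a) (E ⊓ (ℝ ∙ a)ᗮ)
  rw [hsup, hinf, finrank_span_singleton ha0, finrank_bot] at this
  exact ⟨hsup, by omega⟩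

private lemma exists_unit (E : Submodule ℝ W) (hE : 0 < finrank ℝ E) :
    ∃ a ∈ E, ‖a‖ = 1 := by
  obtain ⟨v, hv, hvne⟩ := exists_mem_ne_zero_of_rank_pos
    (by rw [← Submodule.finrank_eq_rank]; exact_mod_cast hE : (0 : Cardinal) < Module.rank ℝ E)
  exact ⟨‖v‖⁻¹ • v, Submodule.smul_mem _ _ hv, norm_smul_inv_norm hvne⟩

private lemma max_exists (E F : Submodule ℝ W) (hE : 0 < finrank ℝ E) (hF : 0 < finrank ℝ F) :
    ∃ a ∈ E, ∃ b ∈ F, ‖a‖ = 1 ∧ ‖b‖ = 1 ∧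
      ∀ x ∈ E, ∀ y ∈ F, ‖x‖ = 1 → ‖y‖ = 1 → ⟪x, y⟫ ≤ ⟪a, b⟫ := by
  obtain ⟨a₀, ha₀E, ha₀⟩ := exists_unit E hE
  obtain ⟨b₀, hb₀F, hb₀⟩ := exists_unit F hF
  set A : Set W := (E : Set W) ∩ Metric.sphere 0 1 with hA
  set B : Set W := (F : Set W) ∩ Metric.sphere 0 1 with hB
  have hAc : IsCompact A := by
    apply Metric.isCompact_of_isClosed_isBounded
    · exact (Submodule.closed_of_finiteDimensional E).inter Metric.isClosed_sphere
    · exact Metric.isBounded_sphere.subset Set.inter_subset_right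
  have hBc : IsCompact B := by
    apply Metric.isCompact_of_isClosed_isBounded
    · exact (Submodule.closed_of_finiteDimensional F).inter Metric.isClosed_sphere
    · exact Metric.isBounded_sphere.subset Set.inter_subset_right
  have hne : (A ×ˢ B).Nonempty := ⟨(a₀, b₀), ⟨ha₀E, by simpa using ha₀⟩, ⟨hb₀F, by simpa using hb₀⟩⟩
  have hcont : ContinuousOn (fun q : W × W => ⟪q.1, q.2⟫) (A ×ˢ B) :=
    (continuous_inner.comp (continuous_fst.prodMk continuous_snd)).continuousOn
  obtain ⟨⟨a, b⟩, hab, hmax⟩ := (hAc.prod hBc).exists_isMaxOn hne hcont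
  refine ⟨a, hab.1.1, b, hab.2.1, by simpa using hab.1.2, by simpa using hab.2.2, ?_⟩
  intro x hx y hy hxn hyn
  exact hmax (Set.mk_mem_prod ⟨hx, by simpa using hxn⟩ ⟨hy, by simpa using hyn⟩)

private lemma max_nonneg {E F : Submodule ℝ W} {a b : W} (haE : a ∈ E) (hbF : b ∈ F)
    (ha : ‖a‖ = 1) (hb : ‖b‖ = 1)
    (hmax : ∀ x ∈ E, ∀ y ∈ F, ‖x‖ = 1 → ‖y‖ = 1 → ⟪x, y⟫ ≤ ⟪a, b⟫) :
    0 ≤ ⟪a, b⟫ := by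
  have := hmax a haE (-b) (Submodule.neg_mem F hbF) ha (by rw [norm_neg]; exact hb)
  rw [inner_neg_right] at this
  linarith

private lemma first_order {E F : Submodule ℝ W} {a b : W} (haE : a ∈ E) (hbF : b ∈ F)
    (ha : ‖a‖ = 1) (hb : ‖b‖ = 1)
    (hmax : ∀ x ∈ E, ∀ y ∈ F, ‖x‖ = 1 → ‖y‖ = 1 → ⟪x, y⟫ ≤ ⟪a, b⟫)
    {x : W} (hxE : x ∈ E) (hax : ⟪a, x⟫ = 0) : ⟪x, b⟫ = 0 := by
  rcases eq_or_ne x 0 with rfl | hx0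
  · exact inner_zero_left b
  -- normalize
  set u : W := ‖x‖⁻¹ • x with hu
  have hun : ‖u‖ = 1 := norm_smul_inv_norm hx0
  have huE : u ∈ E := Submodule.smul_mem _ _ hxE
  have hau : ⟪a, u⟫ = 0 := by rw [hu, real_inner_smul_right, hax]; ring
  have hkey : ⟪u, b⟫ = 0 := by
    by_contra hc
    set σ := ⟪a, b⟫ with hσ
    set c := ⟪u, b⟫ with hc'
    have hσ0 : 0 ≤ σ := max_nonneg haE hbF ha hb hmax
    have hσ1 : σ ≤ 1 := by
      have := real_inner_le_norm a b; rw [ha, hb] at this; linarith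
    set r := Real.sqrt (σ ^ 2 + c ^ 2) with hr
    have hr2 : r ^ 2 = σ ^ 2 + c ^ 2 := Real.sq_sqrt (by positivity)
    have hrpos : 0 < r := Real.sqrt_pos.mpr (by positivity)
    have hrσ : σ < r := by nlinarith [pow_pos (abs_pos.mpr hc) 2, sq_abs c]
    set v : W := (σ / r) • a + (c / r) • u with hv
    have hvE : v ∈ E := Submodule.add_mem _ (Submodule.smul_mem _ _ haE)
      (Submodule.smul_mem _ _ huE)
    have hvn2 : ‖v‖ ^ 2 = 1 := by
      rw [hv, norm_add_sq_real, real_inner_smul_left, real_inner_smul_right,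
        norm_smul, norm_smul, hau, ha, hun]
      field_simp
      rw [Real.norm_eq_abs, Real.norm_eq_abs, sq_abs, sq_abs, div_pow, div_pow]
      field_simp
      nlinarith [hr2, abs_nonneg (σ/r), sq_abs (σ/r), sq_abs (c/r), hrpos]
    have hvn : ‖v‖ = 1 := by
      have := Real.sqrt_sq (norm_nonneg v)
      rw [hvn2, Real.sqrt_one] at this; linarith [this]
    have hvb : ⟪v, b⟫ = r := by
      rw [hv, inner_add_left, real_inner_smul_left, real_inner_smul_left, ← hσ, ← hc']
      field_simp
      nlinarith [hr2]
    have := hmax v hvE b hbF hvn hb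
    rw [hvb] at this
    linarith
  rw [hu, real_inner_smul_left] at hkey
  have hxn : ‖x‖ ≠ 0 := norm_ne_zero_iff.mpr hx0
  have : ‖x‖⁻¹ ≠ 0 := inv_ne_zero hxn
  rcases mul_eq_zero.mp hkey with h | h
  · exact absurd h this
  · exact h

private lemma core :
    ∀ (p : ℕ) (k : ℕ) (E F : Submodule ℝ W), finrank ℝ E = p → finrank ℝ F = k →
    ∃ (e : Fin p → W) (f : Fin k → W),
      Orthonormal ℝ e ∧ Submodule.span ℝ (Set.range e) = E ∧
      Orthonormal ℝ f ∧ Submodule.span ℝ (Set.range f) = F ∧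
      (∀ (i : Fin p) (j : Fin k), (i : ℕ) ≠ (j : ℕ) → ⟪e i, f j⟫ = 0) ∧
      (∀ (i : ℕ) (hip : i < p) (hik : i < k),
        0 ≤ ⟪e ⟨i, hip⟩, f ⟨i, hik⟩⟫ ∧ ⟪e ⟨i, hip⟩, f ⟨i, hik⟩⟫ ≤ 1) ∧
      (∀ (i j : ℕ) (hip : i < p) (hik : i < k) (hjp : j < p) (hjk : j < k), i ≤ j →
        ⟪e ⟨j, hjp⟩, f ⟨j, hjk⟩⟫ ≤ ⟪e ⟨i, hip⟩, f ⟨i, hik⟩⟫) ∧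
      (∀ (i : ℕ) (hip : i < p) (hik : i < k), i < finrank ℝ ↥(E ⊓ F) →
        ⟪e ⟨i, hip⟩, f ⟨i, hik⟩⟫ = 1) := by
  intro p
  induction p with
  | zero =>
    intro k E F hE hF
    obtain ⟨f, hf1, hf2⟩ := exists_onb F k hF
    have hEbot : E = ⊥ := Submodule.finrank_eq_zero.mp hE
    refine ⟨fun i => i.elim0, f, ⟨fun i => i.elim0, fun i => i.elim0⟩, ?_, hf1, hf2,
      fun i => i.elim0, fun i hip => absurd hip (Nat.not_lt_zero i),
      fun i j hip => absurd hip (Nat.not_lt_zero i),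
      fun i hip => absurd hip (Nat.not_lt_zero i)⟩
    rw [hEbot]
    simp
  | succ p IH =>
    intro k E F hE hF
    cases k with
    | zero =>
      obtain ⟨e, he1, he2⟩ := exists_onb E (p + 1) hE
      refine ⟨e, fun j => j.elim0, he1, he2, ⟨fun j => j.elim0, fun j => j.elim0⟩, ?_,
        fun i j => j.elim0, fun i hip hik => absurd hik (Nat.not_lt_zero i),
        fun i j hip hik => absurd hik (Nat.not_lt_zero i),
        fun i hip hik => absurd hik (Nat.not_lt_zero i)⟩
      have hFbot : F = ⊥ := Submodule.finrank_eq_zero.mp hF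
      rw [hFbot]
      simp
    | succ k =>
      obtain ⟨a, haE, b, hbF, ha, hb, hmax⟩ :=
        max_exists E F (by omega) (by omega)
      have hσ0 : 0 ≤ ⟪a, b⟫ := max_nonneg haE hbF ha hb hmax
      have hσ1 : ⟪a, b⟫ ≤ 1 := by
        have := real_inner_le_norm a b; rw [ha, hb] at this; linarith
      obtain ⟨hEsup, hEdim⟩ := split_off E a haE ha
      obtain ⟨hFsup, hFdim⟩ := split_off F b hbF hb
      set E' := E ⊓ (ℝ ∙ a)ᗮ with hE'def
      set F' := F ⊓ (ℝ ∙ b)ᗮ with hF'def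
      have hE' : finrank ℝ E' = p := by omega
      have hF' : finrank ℝ F' = k := by omega
      obtain ⟨e', f', he'on, he'span, hf'on, hf'span, hcross', hbnd', hmono', hone'⟩ :=
        IH k E' F' hE' hF'
      have he'mem : ∀ i, e' i ∈ E' := fun i =>
        he'span ▸ Submodule.subset_span (Set.mem_range_self i)
      have hf'mem : ∀ i, f' i ∈ F' := fun i =>
        hf'span ▸ Submodule.subset_span (Set.mem_range_self i)
      have he'E : ∀ i, e' i ∈ E := fun i => (inf_le_left : E' ≤ E) (he'mem i)
      have hf'F : ∀ i, f' i ∈ F := fun i => (inf_le_left : F' ≤ F) (hf'mem i)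
      have he'perp : ∀ i, ⟪a, e' i⟫ = 0 := fun i =>
        Submodule.mem_orthogonal_singleton_iff_inner_right.mp
          ((inf_le_right : E' ≤ (ℝ ∙ a)ᗮ) (he'mem i))
      have hf'perp : ∀ i, ⟪b, f' i⟫ = 0 := fun i =>
        Submodule.mem_orthogonal_singleton_iff_inner_right.mp
          ((inf_le_right : F' ≤ (ℝ ∙ b)ᗮ) (hf'mem i))
      have hmaxsymm : ∀ x ∈ F, ∀ y ∈ E, ‖x‖ = 1 → ‖y‖ = 1 → ⟪x, y⟫ ≤ ⟪b, a⟫ := by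
        intro x hx y hy hxn hyn
        have h := hmax y hy x hx hyn hxn
        have c1 := real_inner_comm x y
        have c2 := real_inner_comm a b
        linarith
      have haf' : ∀ i, ⟪a, f' i⟫ = 0 := by
        intro i
        rw [real_inner_comm]
        exact first_order hbF haE hb ha hmaxsymm (hf'F i) (hf'perp i)
      have heb' : ∀ i, ⟪e' i, b⟫ = 0 := fun i =>
        first_order haE hbF ha hb hmax (he'E i) (he'perp i)
      have hES : ∀ (i : ℕ) (h : i + 1 < p + 1),
          (Fin.cons a e' : Fin (p+1) → W) ⟨i + 1, h⟩ = e' ⟨i, Nat.succ_lt_succ_iff.mp h⟩ :=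
        fun _ _ => rfl
      have hFS : ∀ (i : ℕ) (h : i + 1 < k + 1),
          (Fin.cons b f' : Fin (k+1) → W) ⟨i + 1, h⟩ = f' ⟨i, Nat.succ_lt_succ_iff.mp h⟩ :=
        fun _ _ => rfl
      have hE0 : ∀ (h : 0 < p + 1), (Fin.cons a e' : Fin (p+1) → W) ⟨0, h⟩ = a := fun _ => rfl
      have hF0 : ∀ (h : 0 < k + 1), (Fin.cons b f' : Fin (k+1) → W) ⟨0, h⟩ = b := fun _ => rfl
      refine ⟨Fin.cons a e', Fin.cons b f', ?_, ?_, ?_, ?_, ?_, ?_, ?_, ?_⟩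
      · rw [orthonormal_iff_ite]
        intro i j
        induction i using Fin.cases with
        | zero =>
          induction j using Fin.cases with
          | zero => simp [real_inner_self_eq_norm_sq, ha]
          | succ j => simp [he'perp j, (Fin.succ_ne_zero j).symm]
        | succ i =>
          induction j using Fin.cases with
          | zero =>
            simp only [Fin.cons_succ, Fin.cons_zero, if_neg (Fin.succ_ne_zero i)]
            rw [real_inner_comm]
            exact he'perp i
          | succ j =>
            simp only [Fin.cons_succ, Fin.succ_inj]
            rw [orthonormal_iff_ite] at he'on
            simpa using he'on i j
      · rw [Fin.range_cons, Submodule.span_insert, he'span]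
        exact hEsup
      · rw [orthonormal_iff_ite]
        intro i j
        induction i using Fin.cases with
        | zero =>
          induction j using Fin.cases with
          | zero => simp [real_inner_self_eq_norm_sq, hb]
          | succ j => simp [hf'perp j, (Fin.succ_ne_zero j).symm]
        | succ i =>
          induction j using Fin.cases with
          | zero =>
            simp only [Fin.cons_succ, Fin.cons_zero, if_neg (Fin.succ_ne_zero i)]
            rw [real_inner_comm]
            exact hf'perp i
          | succ j =>
            simp only [Fin.cons_succ, Fin.succ_inj]
            rw [orthonormal_iff_ite] at hf'on
            simpa using hf'on i j
      · rw [Fin.range_cons, Submodule.span_insert, hf'span]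
        exact hFsup
      · intro i j hij
        induction i using Fin.cases with
        | zero =>
          induction j using Fin.cases with
          | zero => simp at hij
          | succ j => simpa using haf' j
        | succ i =>
          induction j using Fin.cases with
          | zero => simpa using heb' i
          | succ j =>
            simp only [Fin.cons_succ]
            exact hcross' i j (by simpa using hij)
      · intro i hip hik
        rcases Nat.eq_zero_or_pos i with rfl | hipos
        · rw [hE0, hF0]; exact ⟨hσ0, hσ1⟩
        · obtain ⟨i, rfl⟩ : ∃ j, i = j + 1 := ⟨i - 1, by omega⟩
          rw [hES, hFS]
          exact hbnd' i _ _
      · intro i j hip hik hjp hjk hij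
        rcases Nat.eq_zero_or_pos i with rfl | hipos
        · rcases Nat.eq_zero_or_pos j with rfl | hjpos
          · exact le_refl _
          · obtain ⟨j, rfl⟩ : ∃ m, j = m + 1 := ⟨j - 1, by omega⟩
            rw [hES, hFS, hE0, hF0]
            exact hmax _ (he'E _) _ (hf'F _) (he'on.1 _) (hf'on.1 _)
        · obtain ⟨i, rfl⟩ : ∃ m, i = m + 1 := ⟨i - 1, by omega⟩
          obtain ⟨j, rfl⟩ : ∃ m, j = m + 1 := ⟨j - 1, by omega⟩
          simp only [hES, hFS]
          exact hmono' i j _ _ _ _ (by omega)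
      · intro i hip hik hd
        have hσeq : ⟪a, b⟫ = 1 := by
          obtain ⟨v, hvEF, hvn⟩ := exists_unit (E ⊓ F) (by omega)
          have h1 : (1 : ℝ) = ⟪v, v⟫ := by
            rw [real_inner_self_eq_norm_sq, hvn]; norm_num
          have h2 := hmax v ((inf_le_left : E ⊓ F ≤ E) hvEF)
            v ((inf_le_right : E ⊓ F ≤ F) hvEF) hvn hvn
          linarith [h1 ▸ h2]
        rcases Nat.eq_zero_or_pos i with rfl | hipos
        · rw [hE0, hF0]; exact hσeq
        · obtain ⟨i, rfl⟩ : ∃ j, i = j + 1 := ⟨i - 1, by omega⟩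
          have hab : a = b := by
            have hn : ‖a - b‖ ^ 2 = 0 := by
              rw [norm_sub_sq_real, ha, hb, hσeq]; ring
            have h3 : ‖a - b‖ = 0 := pow_eq_zero_iff (n := 2) (by norm_num) |>.mp hn
            have h4 : a - b = 0 := norm_eq_zero.mp h3
            rwa [sub_eq_zero] at h4
          have hinter : E' ⊓ F' = (E ⊓ F) ⊓ (ℝ ∙ a)ᗮ := by
            rw [hE'def, hF'def, ← hab]
            ext x
            simp only [Submodule.mem_inf]
            tauto
          have habEF : a ∈ E ⊓ F := Submodule.mem_inf.mpr ⟨haE, hab ▸ hbF⟩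
          have hd' : finrank ℝ ↥(E' ⊓ F') + 1 = finrank ℝ ↥(E ⊓ F) := by
            rw [hinter]; exact (split_off (E ⊓ F) a habEF ha).2
          rw [hES, hFS]
          exact hone' i _ _ (by omega)
end JordanHelpers

/-- Existence of Jordan angles (Lemma on orbits of pairs of subspaces): for any subspaces
`E`, `F` of dimensions `p`, `k` of an `n'`-dimensional real inner product space there are
orthonormal bases of `E` and `F` and angles `π/2 ≥ θ_1 ≥ … ≥ θ_m ≥ 0` forming a Jordan
system. -/


theorem jordan_angles_exist
    {W : Type*} [NormedAddCommGroup W] [InnerProductSpace ℝ W] [FiniteDimensional ℝ W]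
    (n' p k : ℕ) (hW : Module.finrank ℝ W = n')
    (E F : Submodule ℝ W)
    (hE : Module.finrank ℝ E = p) (hF : Module.finrank ℝ F = k) :
    ∃ (e : Fin p → W) (f : Fin k → W) (θ : Fin (jordanDim n' p k) → ℝ),
      IsJordanSystem n' p k E F e f θ := by
  obtain ⟨e, f, heon, hespan, hfon, hfspan, hcross, hbnd, hmono, hone⟩ := core p k E F hE hF
  set t := min p k with ht
  set d := finrank ℝ ↥(E ⊓ F) with hd
  have htp : t ≤ p := min_le_left _ _
  have htk : t ≤ k := min_le_right _ _
  have hdp : d ≤ p := hE ▸ Submodule.finrank_mono inf_le_left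
  have hdk : d ≤ k := hF ▸ Submodule.finrank_mono inf_le_right
  have hdt : d ≤ t := le_min hdp hdk
  have hpn : p ≤ n' := hW ▸ hE ▸ Submodule.finrank_le E
  have hkn : k ≤ n' := hW ▸ hF ▸ Submodule.finrank_le F
  have hsum : p + k ≤ n' + d := by
    have h1 := Submodule.finrank_sup_add_finrank_inf_eq E F
    have h2 : finrank ℝ ↥(E ⊔ F) ≤ n' := hW ▸ Submodule.finrank_le _
    omega
  have hmdef : jordanDim n' p k = min (min k (n' - k)) (min p (n' - p)) := rfl
  have hmt : jordanDim n' p k ≤ t := by omega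
  have htdm : t - d ≤ jordanDim n' p k := by omega
  -- the permutations
  have hprmp : ∀ i : Fin p, jrho t d (i : ℕ) < p := fun i => jrho_lt htp i.isLt
  have hprmk : ∀ i : Fin k, jrho t d (i : ℕ) < k := fun i => jrho_lt htk i.isLt
  set prm : Fin p → Fin p := fun i => ⟨jrho t d i, hprmp i⟩ with hprm
  set prm' : Fin k → Fin k := fun i => ⟨jrho t d i, hprmk i⟩ with hprm'
  have hprminj : Function.Injective prm := fun i j h =>
    Fin.ext (jrho_inj t d hdt (congrArg Fin.val h))
  have hprm'inj : Function.Injective prm' := fun i j h =>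
    Fin.ext (jrho_inj t d hdt (congrArg Fin.val h))
  have hprmsurj : Function.Surjective prm := (Finite.injective_iff_surjective.mp hprminj)
  have hprm'surj : Function.Surjective prm' := (Finite.injective_iff_surjective.mp hprm'inj)
  -- the diagonal values
  have hg : ∀ (i : ℕ) (h : i < t), ∃ v : ℝ, ∀ (hip : i < p) (hik : i < k),
      (inner ℝ (e ⟨i, hip⟩) (f ⟨i, hik⟩) : ℝ) = v :=
    fun i h => ⟨inner ℝ (e ⟨i, by omega⟩) (f ⟨i, by omega⟩), fun hip hik => rfl⟩
  set G : ℕ → ℝ := fun i =>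
    if h : i < t then inner ℝ (e ⟨jrho t d i, by have := jrho_lt_t (d := d) h; omega⟩)
      (f ⟨jrho t d i, by have := jrho_lt_t (d := d) h; omega⟩) else 0 with hG
  have hGeq : ∀ (i : ℕ) (h : i < t) (hip : jrho t d i < p) (hik : jrho t d i < k),
      G i = inner ℝ (e ⟨jrho t d i, hip⟩) (f ⟨jrho t d i, hik⟩) := by
    intro i h hip hik
    simp only [hG, dif_pos h]
  have hGbnd : ∀ i : ℕ, i < t → 0 ≤ G i ∧ G i ≤ 1 := by
    intro i h
    rw [hGeq i h (by have := jrho_lt_t (d := d) h; omega) (by have := jrho_lt_t (d := d) h; omega)]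
    exact hbnd _ _ _
  have hGone : ∀ i : ℕ, t - d ≤ i → i < t → G i = 1 := by
    intro i h1 h2
    rw [hGeq i h2 (by have := jrho_lt_t (d := d) h2; omega)
      (by have := jrho_lt_t (d := d) h2; omega)]
    apply hone
    rw [jrho_eq_hi (by omega) h2]
    omega
  have hinner_congr : ∀ (i j : ℕ) (hip : i < p) (hik : i < k) (hjp : j < p) (hjk : j < k),
      i = j → (inner ℝ (e ⟨i, hip⟩) (f ⟨i, hik⟩) : ℝ) = inner ℝ (e ⟨j, hjp⟩) (f ⟨j, hjk⟩) := by
    intro i j _ _ _ _ h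
    subst h
    rfl
  have hGmono : ∀ i j : ℕ, i ≤ j → j < t → G i ≤ G j := by
    intro i j hij hjt
    rcases lt_or_ge j (t - d) with hj | hj
    · have hi : i < t - d := by omega
      have e1 : G i = inner ℝ (e ⟨t - 1 - i, by omega⟩) (f ⟨t - 1 - i, by omega⟩) :=
        (hGeq i (by omega) (jrho_lt htp (by omega)) (jrho_lt htk (by omega))).trans
          (hinner_congr _ _ _ _ (by omega) (by omega) (jrho_eq_lo hi))
      have e2 : G j = inner ℝ (e ⟨t - 1 - j, by omega⟩) (f ⟨t - 1 - j, by omega⟩) :=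
        (hGeq j hjt (jrho_lt htp (by omega)) (jrho_lt htk (by omega))).trans
          (hinner_congr _ _ _ _ (by omega) (by omega) (jrho_eq_lo hj))
      rw [e1, e2]
      exact hmono (t - 1 - j) (t - 1 - i) (by omega) (by omega) (by omega) (by omega) (by omega)
    · rw [hGone j hj hjt]
      exact (hGbnd i (by omega)).2
  have harccos_anti : ∀ x y : ℝ, x ≤ y → Real.arccos y ≤ Real.arccos x := by
    intro x y h
    simp only [Real.arccos]
    have := Real.monotone_arcsin h
    linarith
  refine ⟨fun i => e (prm i), fun j => f (prm' j), fun i => Real.arccos (G i),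
    heon.comp prm hprminj, ?_, hfon.comp prm' hprm'inj, ?_, ?_, ?_, ?_, ?_, ?_⟩
  · rw [show Set.range (fun i => e (prm i)) = Set.range (e ∘ prm) from rfl,
      hprmsurj.range_comp e]
    exact hespan
  · rw [show Set.range (fun j => f (prm' j)) = Set.range (f ∘ prm') from rfl,
      hprm'surj.range_comp f]
    exact hfspan
  · intro i
    have hit : (i : ℕ) < t := lt_of_lt_of_le i.isLt hmt
    exact ⟨Real.arccos_nonneg _, Real.arccos_le_pi_div_two.mpr (hGbnd i hit).1⟩
  · intro i j hij
    exact harccos_anti _ _ (hGmono i j hij (lt_of_lt_of_le j.isLt hmt))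
  · intro i j hij
    apply hcross
    intro hcon
    exact hij (jrho_inj t d hdt hcon)
  · intro i
    have hit : (i : ℕ) < t := lt_of_lt_of_le i.isLt hmt
    obtain ⟨h0, h1⟩ := hGbnd i hit
    rw [Real.cos_arccos (by linarith) h1]
    exact (hGeq i hit (jrho_lt htp (by omega)) (jrho_lt htk (by omega))).symm
  · intro i hip hik him
    have hit : i < t := lt_min hip hik
    exact (hGeq i hit (jrho_lt htp (by omega)) (jrho_lt htk (by omega))).symm.trans
      (hGone i (by omega) hit)
end

section
/- Let W be an n'-dimensional real inner product space and let E, F be subspaces with dim E = p, dim F = k, and m := min{k, n'−k, p, n'−p}. Suppose (e_1,…,e_p; f_1,…,f_k; θ_1 ≥ … ≥ θ_m) and (ẽ_1,…,ẽ_p; f̃_1,…,f̃_k; θ̃_1 ≥ … ≥ θ̃_m) are both Jordan systems for (E, F), where the angles lie in [0, π/2] and are nonincreasing. Then θ_i = θ̃_i for all 1 ≤ i ≤ m. In other words, the Jordan angles of a pair of subspaces are unique. -/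
open Real

open Finset

lemma aux_eig_ker {V : Type*} [NormedAddCommGroup V] [InnerProductSpace ℝ V]
    {p : ℕ} (v : Fin p → V) (hv : Orthonormal ℝ v)
    (hspan : Submodule.span ℝ (Set.range v) = ⊤)
    (S : V →ₗ[ℝ] V) (μ : Fin p → ℝ) (hS : ∀ i, S (v i) = μ i • v i) (c : ℝ) :
    Module.finrank ℝ (LinearMap.ker (S - c • LinearMap.id)) =
      (Finset.univ.filter (fun i => μ i = c)).card := by
  classical
  set T := S - c • LinearMap.id with hT
  have hTv : ∀ i, T (v i) = (μ i - c) • v i := by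
    intro i
    simp [hT, hS i, sub_smul, LinearMap.sub_apply]
  have hker : LinearMap.ker T = Submodule.span ℝ (v '' {i | μ i = c}) := by
    apply le_antisymm
    · intro x hx
      have hx0 : T x = 0 := hx
      have hxtop : x ∈ Submodule.span ℝ (Set.range v) := by rw [hspan]; trivial
      obtain ⟨a, rfl⟩ := (Submodule.mem_span_range_iff_exists_fun ℝ).1 hxtop
      have hsum : ∑ i, (a i * (μ i - c)) • v i = 0 := by
        have := hx0
        rw [map_sum] at this
        simpa [hTv, smul_smul, mul_comm] using this
      have hcoef : ∀ i, a i * (μ i - c) = 0 :=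
        Fintype.linearIndependent_iff.1 hv.linearIndependent _ hsum
      have : ∑ i, a i • v i = ∑ i ∈ univ.filter (fun i => μ i = c), a i • v i := by
        refine (Finset.sum_subset (Finset.subset_univ _) ?_).symm
        intro i _ hi
        have hμ : μ i ≠ c := by simpa using hi
        have : a i = 0 := by
          have := hcoef i
          rcases mul_eq_zero.1 this with h | h
          · exact h
          · exact absurd (by linarith [sub_eq_zero.1 h]) hμ
        simp [this]
      rw [this]
      refine Submodule.sum_mem _ ?_
      intro i hi
      exact Submodule.smul_mem _ _ (Submodule.subset_span ⟨i, by simpa using hi, rfl⟩)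
    · rw [Submodule.span_le]
      rintro _ ⟨i, hi, rfl⟩
      have : T (v i) = 0 := by
        rw [hTv i]
        have : μ i = c := hi
        simp [this]
      exact this
  rw [hker]
  have hli : LinearIndependent ℝ (fun i : {i // μ i = c} => v i) :=
    hv.linearIndependent.comp _ Subtype.val_injective
  have hrange : Set.range (fun i : {i // μ i = c} => v i) = v '' {i | μ i = c} := by
    ext x; simp [Set.mem_image]
  rw [← hrange, finrank_span_eq_card hli, Fintype.card_subtype]

lemma aux_proj_eq {W : Type*} [NormedAddCommGroup W] [InnerProductSpace ℝ W]
    {k : ℕ} (f : Fin k → W) (F : Submodule ℝ W) [Submodule.HasOrthogonalProjection F]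
    (hspan : Submodule.span ℝ (Set.range f) = F) (u v : W) (hv : v ∈ F)
    (h : ∀ j, inner ℝ (u - v) (f j) = (0 : ℝ)) :
    (Submodule.orthogonalProjection F u : W) = v := by
  refine (Submodule.coe_orthogonalProjectionOnto_apply F u).trans
    (Submodule.eq_starProjection_of_mem_of_inner_eq_zero hv ?_)
  intro w hw
  have hF : F ≤ LinearMap.ker (innerₛₗ ℝ (u - v)) := by
    rw [← hspan, Submodule.span_le]
    rintro _ ⟨j, rfl⟩
    simpa [LinearMap.mem_ker, innerₛₗ_apply_apply, inner_sub_left] using h j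
  have := hF hw
  simp only [LinearMap.mem_ker, innerₛₗ_apply_apply] at this
  rw [inner_sub_left]
  simpa [inner_sub_left] using this

lemma aux_count_le {N : ℕ} (g g' : Fin N → ℝ)
    (h : ∀ c, (Finset.univ.filter (fun i => g i = c)).card
        = (Finset.univ.filter (fun i => g' i = c)).card) (c : ℝ) :
    (Finset.univ.filter (fun i => g i ≤ c)).card
      = (Finset.univ.filter (fun i => g' i ≤ c)).card := by
  classical
  set A : Finset ℝ := (Finset.univ.image g ∪ Finset.univ.image g').filter (· ≤ c) with hA
  have key : ∀ g0 : Fin N → ℝ, (∀ i, g0 i ∈ Finset.univ.image g ∪ Finset.univ.image g') →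
      (Finset.univ.filter (fun i => g0 i ≤ c)).card
        = ∑ b ∈ A, (Finset.univ.filter (fun i => g0 i = b)).card := by
    intro g0 hg0
    rw [Finset.card_eq_sum_card_fiberwise (f := g0) (t := A)
      (fun x hx => by simp only [Finset.mem_coe, hA, Finset.mem_filter]; exact ⟨hg0 x, (Finset.mem_filter.1 hx).2⟩)]
    refine Finset.sum_congr rfl ?_
    intro b hb
    have hbc : b ≤ c := (Finset.mem_filter.1 hb).2
    congr 1
    ext i
    simp only [Finset.mem_filter, Finset.mem_univ, true_and]
    constructor
    · rintro ⟨_, h2⟩; exact h2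
    · rintro h2; exact ⟨h2 ▸ hbc, h2⟩
  rw [key g (fun i => Finset.mem_union_left _ (Finset.mem_image_of_mem g (Finset.mem_univ i))),
      key g' (fun i => Finset.mem_union_right _ (Finset.mem_image_of_mem g' (Finset.mem_univ i)))]
  exact Finset.sum_congr rfl fun b _ => h b

lemma aux_mono_eq {N : ℕ} (g g' : Fin N → ℝ) (hg : Monotone g) (hg' : Monotone g')
    (h : ∀ c, (Finset.univ.filter (fun i => g i = c)).card
        = (Finset.univ.filter (fun i => g' i = c)).card) :
    ∀ i, g i = g' i := by
  classical
  have hle := aux_count_le g g' h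
  have key : ∀ (a b : Fin N → ℝ), Monotone a → Monotone b →
      (∀ c, (Finset.univ.filter (fun i => a i ≤ c)).card
        = (Finset.univ.filter (fun i => b i ≤ c)).card) → ∀ i, ¬ a i < b i := by
    intro a b ha hb hab i hlt
    have h1 : (i : ℕ) + 1 ≤ (Finset.univ.filter (fun j => a j ≤ a i)).card := by
      calc (i:ℕ) + 1 = (Finset.Iic i).card := (Fin.card_Iic i).symm
      _ ≤ _ := Finset.card_le_card (by
          intro j hj
          simp only [Finset.mem_Iic] at hj
          simp only [Finset.mem_filter, Finset.mem_univ, true_and]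
          exact ha hj)
    have h2 : (Finset.univ.filter (fun j => b j ≤ a i)).card ≤ (i : ℕ) := by
      calc (Finset.univ.filter (fun j => b j ≤ a i)).card
          ≤ (Finset.Iio i).card := Finset.card_le_card (by
            intro j hj
            simp only [Finset.mem_filter, Finset.mem_univ, true_and] at hj
            simp only [Finset.mem_Iio]
            by_contra hij
            exact absurd (hb (not_lt.1 hij)) (not_le.2 (lt_of_le_of_lt hj hlt)))
      _ = i := Fin.card_Iio i
    have := hab (a i)
    omega
  intro i
  exact le_antisymm (not_lt.1 (key g' g hg' hg (fun c => (hle c).symm) i))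
    (not_lt.1 (key g g' hg hg' hle i))



section Main
variable {W : Type*} [NormedAddCommGroup W] [InnerProductSpace ℝ W] [FiniteDimensional ℝ W]

-- instances check
example (F : Submodule ℝ W) : Submodule.HasOrthogonalProjection F := by infer_instance

-- key computation: the eigenvalue relation for a Jordan system
lemma jordan_eig (n' p k : ℕ) (E F : Submodule ℝ W)
    (e : Fin p → W) (f : Fin k → W) (θ : Fin (jordanDim n' p k) → ℝ)
    (h1 : IsJordanSystem n' p k E F e f θ) (i : Fin p) :
    (((Submodule.orthogonalProjection E) (F.subtype ((Submodule.orthogonalProjection F) (e i)))) : W)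
      = (if h : (i : ℕ) < k then (inner ℝ (e i) (f ⟨(i : ℕ), h⟩) : ℝ)^2 else 0) • (e i) := by
  obtain ⟨he, hspanE, hf, hspanF, hθ, hmono, h7, h8, h9⟩ := h1
  by_cases h : (i : ℕ) < k
  · set j : Fin k := ⟨(i : ℕ), h⟩ with hj
    set c : ℝ := inner ℝ (e i) (f j) with hc
    have hfj : f j ∈ F := hspanF ▸ Submodule.subset_span (Set.mem_range_self j)
    have hei : e i ∈ E := hspanE ▸ Submodule.subset_span (Set.mem_range_self i)
    have step1 : ((Submodule.orthogonalProjection F) (e i) : W) = c • f j := by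
      refine aux_proj_eq f F hspanF _ _ (Submodule.smul_mem _ _ hfj) ?_
      intro j'
      rw [inner_sub_left, real_inner_smul_left]
      by_cases hjj : j' = j
      · rw [hjj, real_inner_self_eq_norm_sq, hf.1 j]
        simp [← hc]
      · have hne : (i : ℕ) ≠ (j' : ℕ) := fun hh => hjj (Fin.ext hh.symm)
        rw [h7 i j' hne, hf.2 (Ne.symm hjj)]
        ring
    have step2 : ((Submodule.orthogonalProjection E) (f j) : W) = c • e i := by
      refine aux_proj_eq e E hspanE _ _ (Submodule.smul_mem _ _ hei) ?_
      intro i'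
      rw [inner_sub_left, real_inner_smul_left]
      by_cases hii : i' = i
      · rw [hii, real_inner_self_eq_norm_sq, he.1 i, real_inner_comm, ← hc]
        ring
      · have hne : (i' : ℕ) ≠ (j : ℕ) := fun hh => hii (Fin.ext hh)
        rw [real_inner_comm, h7 i' j hne, he.2 (fun hh => hii hh.symm)]
        ring
    have hsub : F.subtype ((Submodule.orthogonalProjection F) (e i)) = c • f j := step1
    rw [hsub, map_smul, Submodule.coe_smul, step2, dif_pos h, smul_smul, ← hc, sq]
  · have step1 : ((Submodule.orthogonalProjection F) (e i) : W) = (0 : W) := by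
      refine aux_proj_eq f F hspanF _ _ (Submodule.zero_mem F) ?_
      intro j'
      rw [sub_zero]
      exact h7 i j' (by omega)
    have hsub : F.subtype ((Submodule.orthogonalProjection F) (e i)) = (0 : W) := step1
    rw [hsub, map_zero, dif_neg h, zero_smul, Submodule.coe_zero]

end Main

section Main2
variable {W : Type*} [NormedAddCommGroup W] [InnerProductSpace ℝ W] [FiniteDimensional ℝ W]

-- the count of each eigenvalue is determined by E and F
lemma jordan_count (n' p k : ℕ) (E F : Submodule ℝ W)
    (e : Fin p → W) (f : Fin k → W) (θ : Fin (jordanDim n' p k) → ℝ)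
    (h1 : IsJordanSystem n' p k E F e f θ) (c : ℝ) :
    (Finset.univ.filter (fun i : Fin p =>
        (if h : (i : ℕ) < k then (inner ℝ (e i) (f ⟨(i : ℕ), h⟩) : ℝ)^2 else 0) = c)).card
      = Module.finrank ℝ (LinearMap.ker
          ((((Submodule.orthogonalProjection E).toLinearMap.comp
              (F.subtype.comp (Submodule.orthogonalProjection F).toLinearMap)).comp E.subtype)
            - c • LinearMap.id)) := by
  classical
  obtain ⟨he, hspanE, hf, hspanF, hθ, hmono, h7, h8, h9⟩ := h1
  set lam : Fin p → ℝ := fun i =>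
    if h : (i : ℕ) < k then (inner ℝ (e i) (f ⟨(i : ℕ), h⟩) : ℝ)^2 else 0 with hlam
  set ee : Fin p → E := fun i => ⟨e i, hspanE ▸ Submodule.subset_span (Set.mem_range_self i)⟩
    with hee
  have heon : Orthonormal ℝ ee := by
    rw [orthonormal_iff_ite] at he ⊢
    exact he
  have hetop : Submodule.span ℝ (Set.range ee) = ⊤ := by
    apply Submodule.map_injective_of_injective E.injective_subtype
    rw [Submodule.map_span, ← Set.range_comp]
    have hcomp : E.subtype ∘ ee = e := rfl
    rw [hcomp, hspanE, Submodule.map_top, Submodule.range_subtype]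
  set S : E →ₗ[ℝ] E := ((Submodule.orthogonalProjection E).toLinearMap.comp
      (F.subtype.comp (Submodule.orthogonalProjection F).toLinearMap)).comp E.subtype with hSdef
  have hS : ∀ i, S (ee i) = lam i • ee i := by
    intro i
    apply Subtype.ext
    have := jordan_eig n' p k E F e f θ
      ⟨he, hspanE, hf, hspanF, hθ, hmono, h7, h8, h9⟩ i
    exact this
  exact (aux_eig_ker ee heon hetop S lam hS c).symm

end Main2

lemma aux_restrict {p N : ℕ} (hNp : N ≤ p) (lam : Fin p → ℝ)
    (hzero : ∀ i : Fin p, ¬ (i : ℕ) < N → lam i = 0) (c : ℝ) :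
    (Finset.univ.filter (fun i : Fin p => lam i = c)).card
      = (Finset.univ.filter (fun i : Fin N => lam (Fin.castLE hNp i) = c)).card
        + (Finset.univ.filter (fun i : Fin p => ¬ (i : ℕ) < N ∧ (0 : ℝ) = c)).card := by
  classical
  have hsplit := Finset.card_filter_add_card_filter_not
    (s := Finset.univ.filter (fun i : Fin p => lam i = c)) (p := fun i => (i : ℕ) < N)
  rw [Finset.filter_filter, Finset.filter_filter] at hsplit
  have e1 : (Finset.univ.filter (fun i : Fin p => lam i = c ∧ (i : ℕ) < N)).card
      = (Finset.univ.filter (fun i : Fin N => lam (Fin.castLE hNp i) = c)).card := by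
    refine Finset.card_bij (fun i hi => ⟨(i : ℕ), (Finset.mem_filter.1 hi).2.2⟩) ?_ ?_ ?_
    · intro a ha
      simp only [Finset.mem_filter, Finset.mem_univ, true_and] at ha ⊢
      exact ha.1
    · intro a ha b hb hab
      have h' : ((⟨(a : ℕ), (Finset.mem_filter.1 ha).2.2⟩ : Fin N) : ℕ)
          = ((⟨(b : ℕ), (Finset.mem_filter.1 hb).2.2⟩ : Fin N) : ℕ) := congrArg Fin.val hab
      exact Fin.ext h'
    · intro b hb
      simp only [Finset.mem_filter, Finset.mem_univ, true_and] at hb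
      refine ⟨Fin.castLE hNp b, ?_, rfl⟩
      simp only [Finset.mem_filter, Finset.mem_univ, true_and]
      exact ⟨hb, b.isLt⟩
  have e2 : (Finset.univ.filter (fun i : Fin p => lam i = c ∧ ¬ (i : ℕ) < N)).card
      = (Finset.univ.filter (fun i : Fin p => ¬ (i : ℕ) < N ∧ (0 : ℝ) = c)).card := by
    congr 1
    refine Finset.filter_congr ?_
    intro i _
    constructor
    · rintro ⟨hl, hn⟩; exact ⟨hn, by rw [← hl, hzero i hn]⟩
    · rintro ⟨hn, hz⟩; exact ⟨by rw [hzero i hn, hz], hn⟩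
  omega

section Main3
variable {W : Type*} [NormedAddCommGroup W] [InnerProductSpace ℝ W] [FiniteDimensional ℝ W]

lemma jordan_mono (n' p k : ℕ) (E F : Submodule ℝ W)
    (e : Fin p → W) (f : Fin k → W) (θ : Fin (jordanDim n' p k) → ℝ)
    (h1 : IsJordanSystem n' p k E F e f θ) :
    Monotone (fun i : Fin (min k p) =>
      (inner ℝ (e ⟨(i : ℕ), lt_of_lt_of_le i.isLt (min_le_right k p)⟩)
             (f ⟨(i : ℕ), lt_of_lt_of_le i.isLt (min_le_left k p)⟩) : ℝ)^2) := by
  obtain ⟨he, hspanE, hf, hspanF, hθ, hmono, h7, h8, h9⟩ := h1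
  have hmk : jordanDim n' p k ≤ k := (min_le_left _ _).trans (min_le_left _ _)
  have hmp : jordanDim n' p k ≤ p := (min_le_right _ _).trans (min_le_left _ _)
  intro a b hab
  simp only
  have hab' : (a : ℕ) ≤ (b : ℕ) := hab
  by_cases hb : (b : ℕ) < jordanDim n' p k
  · have ha : (a : ℕ) < jordanDim n' p k := lt_of_le_of_lt hab' hb
    set ia : Fin (jordanDim n' p k) := ⟨(a : ℕ), ha⟩
    set ib : Fin (jordanDim n' p k) := ⟨(b : ℕ), hb⟩
    have hca : (inner ℝ (e ⟨(a : ℕ), lt_of_lt_of_le a.isLt (min_le_right k p)⟩)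
        (f ⟨(a : ℕ), lt_of_lt_of_le a.isLt (min_le_left k p)⟩) : ℝ) = Real.cos (θ ia) := h8 ia
    have hcb : (inner ℝ (e ⟨(b : ℕ), lt_of_lt_of_le b.isLt (min_le_right k p)⟩)
        (f ⟨(b : ℕ), lt_of_lt_of_le b.isLt (min_le_left k p)⟩) : ℝ) = Real.cos (θ ib) := h8 ib
    rw [hca, hcb]
    have hθba : θ ib ≤ θ ia := hmono ia ib hab'
    have h0a : 0 ≤ Real.cos (θ ia) := Real.cos_nonneg_of_mem_Icc
      ⟨by linarith [(hθ ia).1, Real.pi_pos], (hθ ia).2⟩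
    have hcos : Real.cos (θ ia) ≤ Real.cos (θ ib) :=
      Real.cos_le_cos_of_nonneg_of_le_pi (hθ ib).1
        (by linarith [(hθ ia).2, Real.pi_pos]) hθba
    exact pow_le_pow_left₀ h0a hcos 2
  · have hcb : (inner ℝ (e ⟨(b : ℕ), lt_of_lt_of_le b.isLt (min_le_right k p)⟩)
        (f ⟨(b : ℕ), lt_of_lt_of_le b.isLt (min_le_left k p)⟩) : ℝ) = 1 :=
      h9 (b : ℕ) _ _ (not_lt.1 hb)
    rw [hcb]
    by_cases ha : (a : ℕ) < jordanDim n' p k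
    · have hca : (inner ℝ (e ⟨(a : ℕ), lt_of_lt_of_le a.isLt (min_le_right k p)⟩)
          (f ⟨(a : ℕ), lt_of_lt_of_le a.isLt (min_le_left k p)⟩) : ℝ)
          = Real.cos (θ ⟨(a : ℕ), ha⟩) := h8 ⟨(a : ℕ), ha⟩
      rw [hca]
      nlinarith [Real.neg_one_le_cos (θ ⟨(a : ℕ), ha⟩), Real.cos_le_one (θ ⟨(a : ℕ), ha⟩)]
    · have hca : (inner ℝ (e ⟨(a : ℕ), lt_of_lt_of_le a.isLt (min_le_right k p)⟩)
          (f ⟨(a : ℕ), lt_of_lt_of_le a.isLt (min_le_left k p)⟩) : ℝ) = 1 :=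
        h9 (a : ℕ) _ _ (not_lt.1 ha)
      rw [hca]

end Main3


/-- Uniqueness of Jordan angles: any two Jordan systems for the same pair of subspaces
`(E, F)` have the same (nonincreasing) sequence of angles. -/
theorem jordan_angles_unique
    {W : Type*} [NormedAddCommGroup W] [InnerProductSpace ℝ W] [FiniteDimensional ℝ W]
    (n' p k : ℕ) (hW : Module.finrank ℝ W = n')
    (E F : Submodule ℝ W)
    (hE : Module.finrank ℝ E = p) (hF : Module.finrank ℝ F = k)
    (e e' : Fin p → W) (f f' : Fin k → W)
    (θ θ' : Fin (jordanDim n' p k) → ℝ)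
    (h1 : IsJordanSystem n' p k E F e f θ)
    (h2 : IsJordanSystem n' p k E F e' f' θ') :
    ∀ i, θ i = θ' i := by
  classical
  have h1' := h1
  have h2' := h2
  obtain ⟨he, hspanE, hf, hspanF, hθ, hmono, h7, h8, h9⟩ := h1'
  obtain ⟨he2, hspanE2, hf2, hspanF2, hθ2, hmono2, h72, h82, h92⟩ := h2'
  have hmk : jordanDim n' p k ≤ k := (min_le_left _ _).trans (min_le_left _ _)
  have hmp : jordanDim n' p k ≤ p := (min_le_right _ _).trans (min_le_left _ _)
  have hNp : min k p ≤ p := min_le_right _ _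
  have hNk : min k p ≤ k := min_le_left _ _
  have hmN : jordanDim n' p k ≤ min k p := le_min hmk hmp
  set lam : Fin p → ℝ := fun i =>
    if h : (i : ℕ) < k then (inner ℝ (e i) (f ⟨(i : ℕ), h⟩) : ℝ)^2 else 0 with hlam
  set lam2 : Fin p → ℝ := fun i =>
    if h : (i : ℕ) < k then (inner ℝ (e' i) (f' ⟨(i : ℕ), h⟩) : ℝ)^2 else 0 with hlam2
  have hcount : ∀ c, (Finset.univ.filter (fun i => lam i = c)).card
      = (Finset.univ.filter (fun i => lam2 i = c)).card := fun c =>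
    (jordan_count n' p k E F e f θ h1 c).trans (jordan_count n' p k E F e' f' θ' h2 c).symm
  have hzero : ∀ i : Fin p, ¬ (i : ℕ) < min k p → lam i = 0 := fun i hi =>
    dif_neg (fun hk => hi (lt_min hk i.isLt))
  have hzero2 : ∀ i : Fin p, ¬ (i : ℕ) < min k p → lam2 i = 0 := fun i hi =>
    dif_neg (fun hk => hi (lt_min hk i.isLt))
  set g : Fin (min k p) → ℝ := fun i =>
    (inner ℝ (e ⟨(i : ℕ), lt_of_lt_of_le i.isLt (min_le_right k p)⟩)
           (f ⟨(i : ℕ), lt_of_lt_of_le i.isLt (min_le_left k p)⟩) : ℝ)^2 with hg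
  set g2 : Fin (min k p) → ℝ := fun i =>
    (inner ℝ (e' ⟨(i : ℕ), lt_of_lt_of_le i.isLt (min_le_right k p)⟩)
           (f' ⟨(i : ℕ), lt_of_lt_of_le i.isLt (min_le_left k p)⟩) : ℝ)^2 with hg2
  have hgl : ∀ i : Fin (min k p), lam (Fin.castLE hNp i) = g i := by
    intro i
    rw [hlam]
    exact dif_pos (lt_of_lt_of_le i.isLt hNk)
  have hgl2 : ∀ i : Fin (min k p), lam2 (Fin.castLE hNp i) = g2 i := by
    intro i
    rw [hlam2]
    exact dif_pos (lt_of_lt_of_le i.isLt hNk)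
  have hcg : ∀ c, (Finset.univ.filter (fun i => g i = c)).card
      = (Finset.univ.filter (fun i => g2 i = c)).card := by
    intro c
    have r1 := aux_restrict hNp lam hzero c
    have r2 := aux_restrict hNp lam2 hzero2 c
    have e1 : Finset.univ.filter (fun i : Fin (min k p) => lam (Fin.castLE hNp i) = c)
        = Finset.univ.filter (fun i => g i = c) :=
      Finset.filter_congr (fun i _ => iff_of_eq (congrArg (· = c) (hgl i)))
    have e2 : Finset.univ.filter (fun i : Fin (min k p) => lam2 (Fin.castLE hNp i) = c)
        = Finset.univ.filter (fun i => g2 i = c) :=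
      Finset.filter_congr (fun i _ => iff_of_eq (congrArg (· = c) (hgl2 i)))
    rw [e1] at r1
    rw [e2] at r2
    have := hcount c
    omega
  have hgeq := aux_mono_eq g g2 (jordan_mono n' p k E F e f θ h1)
    (jordan_mono n' p k E F e' f' θ' h2) hcg
  intro i
  have hiN : (i : ℕ) < min k p := lt_of_lt_of_le i.isLt hmN
  have hip : (i : ℕ) < p := lt_of_lt_of_le i.isLt hmp
  have hik : (i : ℕ) < k := lt_of_lt_of_le i.isLt hmk
  have key : (inner ℝ (e ⟨(i : ℕ), hip⟩) (f ⟨(i : ℕ), hik⟩) : ℝ)^2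
      = (inner ℝ (e' ⟨(i : ℕ), hip⟩) (f' ⟨(i : ℕ), hik⟩) : ℝ)^2 := hgeq ⟨(i : ℕ), hiN⟩
  rw [show (inner ℝ (e ⟨(i : ℕ), hip⟩) (f ⟨(i : ℕ), hik⟩) : ℝ) = Real.cos (θ i) from h8 i,
      show (inner ℝ (e' ⟨(i : ℕ), hip⟩) (f' ⟨(i : ℕ), hik⟩) : ℝ) = Real.cos (θ' i) from h82 i]
      at key
  have h0 : 0 ≤ Real.cos (θ i) := Real.cos_nonneg_of_mem_Icc
    ⟨by linarith [(hθ i).1, Real.pi_pos], (hθ i).2⟩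
  have h02 : 0 ≤ Real.cos (θ' i) := Real.cos_nonneg_of_mem_Icc
    ⟨by linarith [(hθ2 i).1, Real.pi_pos], (hθ2 i).2⟩
  have hcos : Real.cos (θ i) = Real.cos (θ' i) := by nlinarith
  exact Real.injOn_cos ⟨(hθ i).1, by linarith [(hθ i).2, Real.pi_pos]⟩
    ⟨(hθ2 i).1, by linarith [(hθ2 i).2, Real.pi_pos]⟩ hcos
end

section
/- Let W be an n'-dimensional real inner product space and let E, F be subspaces with dim E = p, dim F = k and m := min{k, n'−k, p, n'−p}. Let (e; f; θ_1 ≥ … ≥ θ_m) be a Jordan system for (E, F) with angles in [0, π/2], and let ℓ be the number of indices i ∈ {1,…,m} with θ_i ≠ 0 (equivalently, the largest index ℓ with θ_ℓ ≠ 0). Then dim(E + F) = max{k, p} + ℓ. -/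
open Real

/-- If `(e; f; θ)` is a Jordan system for `(E, F)` and `ℓ` is the number of nonzero
Jordan angles, then `dim (E + F) = max {k, p} + ℓ`. -/
theorem jordan_dim_sup
    {W : Type*} [NormedAddCommGroup W] [InnerProductSpace ℝ W] [FiniteDimensional ℝ W]
    (n' p k : ℕ) (hW : Module.finrank ℝ W = n')
    (E F : Submodule ℝ W)
    (hE : Module.finrank ℝ E = p) (hF : Module.finrank ℝ F = k)
    (e : Fin p → W) (f : Fin k → W) (θ : Fin (jordanDim n' p k) → ℝ)
    (hJ : IsJordanSystem n' p k E F e f θ) :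
    Module.finrank ℝ (E ⊔ F : Submodule ℝ W)
      = max k p + Nat.card {i : Fin (jordanDim n' p k) // θ i ≠ 0} := by
  classical
  obtain ⟨he, hEe, hf, hFf, hθ01, hθmono, horth, hcos, hone⟩ := hJ
  have hmk : jordanDim n' p k ≤ k := (min_le_left _ _).trans (min_le_left _ _)
  have hmp : jordanDim n' p k ≤ p := (min_le_right _ _).trans (min_le_left _ _)
  have hmmin : jordanDim n' p k ≤ min k p := le_min hmk hmp
  -- the "good" index set: indices i with e i = f i
  set Q : Fin p → Prop := fun i =>
      (i : ℕ) < min k p ∧ ∀ h : (i : ℕ) < jordanDim n' p k, θ ⟨i, h⟩ = 0 with hQ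
  -- inner products ⟪e i, f j⟫
  have hinner : ∀ (i : Fin p) (j : Fin k), inner ℝ (e i) (f j) =
      if hij : (i : ℕ) = (j : ℕ) then
        (if h : (i : ℕ) < jordanDim n' p k then Real.cos (θ ⟨i, h⟩) else 1)
      else (0 : ℝ) := by
    intro i j
    split_ifs with hij h
    · have := hcos ⟨i, h⟩
      have hi : (⟨(i : ℕ), i.isLt⟩ : Fin p) = i := rfl
      have hj : (⟨(i : ℕ), hij ▸ j.isLt⟩ : Fin k) = j := by
        apply Fin.ext; simp [hij]
      simpa [hi, ← hj] using this
    · have := hone i i.isLt (hij ▸ j.isLt) (le_of_not_gt h)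
      have hj : (⟨(i : ℕ), hij ▸ j.isLt⟩ : Fin k) = j := by
        apply Fin.ext; simp [hij]
      simpa [← hj] using this
    · exact horth i j hij
  -- For good indices, e i = f i
  have hef : ∀ (i : Fin p) (hik : (i : ℕ) < k), Q i → e i = f ⟨i, hik⟩ := by
    intro i hik hQi
    have h1 : inner ℝ (e i) (f ⟨i, hik⟩) = (1 : ℝ) := by
      rw [hinner i ⟨i, hik⟩, dif_pos rfl]
      split_ifs with h
      · rw [hQi.2 h, Real.cos_zero]
      · rfl
    exact (inner_eq_one_iff_of_norm_eq_one (he.1 i) (hf.1 _)).mp h1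
  -- E ⊓ F = span of good e's
  have hinf : (E ⊓ F : Submodule ℝ W) = Submodule.span ℝ (e '' {i | Q i}) := by
    apply le_antisymm
    · intro v hv
      obtain ⟨hvE, hvF⟩ := hv
      rw [← hEe] at hvE
      rw [← hFf] at hvF
      obtain ⟨a, ha⟩ := (Submodule.mem_span_range_iff_exists_fun ℝ).mp hvE
      obtain ⟨b, hb⟩ := (Submodule.mem_span_range_iff_exists_fun ℝ).mp hvF
      -- key computations
      have haval : ∀ i : Fin p, a i = inner ℝ (e i) v := by
        intro i; rw [← ha]; exact (he.inner_right_fintype a i).symm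
      have hbval : ∀ j : Fin k, b j = inner ℝ (f j) v := by
        intro j; rw [← hb]; exact (hf.inner_right_fintype b j).symm
      have hzero : ∀ i : Fin p, ¬ Q i → a i = 0 := by
        intro i hni
        have hav : a i = ∑ j : Fin k, b j * inner ℝ (e i) (f j) := by
          rw [haval i, ← hb, inner_sum]
          congr 1; ext j; rw [real_inner_smul_right]
        by_cases hik : (i : ℕ) < k
        · -- i < k, so since i < p, i < min k p; the bad reason must be a nonzero angle
          have himin : (i : ℕ) < min k p := lt_min hik i.isLt
          have hbad : ∃ h : (i : ℕ) < jordanDim n' p k, θ ⟨i, h⟩ ≠ 0 := by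
            by_contra hc
            push_neg at hc
            exact hni ⟨himin, hc⟩
          obtain ⟨him, hθne⟩ := hbad
          set c : ℝ := Real.cos (θ ⟨i, him⟩) with hc
          have hav' : a i = b ⟨i, hik⟩ * c := by
            rw [hav, Finset.sum_eq_single (⟨i, hik⟩ : Fin k)]
            · rw [hinner i ⟨i, hik⟩, dif_pos rfl, dif_pos him]
            · intro j _ hji
              rw [hinner i j, dif_neg, mul_zero]
              intro hcc; exact hji (Fin.ext hcc.symm)
            · intro hno; exact absurd (Finset.mem_univ _) hno
          have hbv' : b ⟨i, hik⟩ = a i * c := by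
            rw [hbval, ← ha, inner_sum]
            rw [Finset.sum_eq_single i]
            · rw [real_inner_smul_right, real_inner_comm, hinner i ⟨i, hik⟩, dif_pos rfl,
                dif_pos him]
            · intro j _ hji
              rw [real_inner_smul_right, real_inner_comm, hinner j ⟨i, hik⟩, dif_neg, mul_zero]
              intro hcc; exact hji (Fin.ext hcc)
            · intro hno; exact absurd (Finset.mem_univ _) hno
          have hcl : c < 1 := by
            rw [hc, ← Real.cos_zero]
            apply Real.cos_lt_cos_of_nonneg_of_le_pi le_rfl
            · exact (hθ01 _).2.trans (by linarith [Real.pi_pos])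
            · exact lt_of_le_of_ne (hθ01 _).1 (Ne.symm hθne)
          have hc0 : 0 ≤ c := by
            rw [hc]
            apply Real.cos_nonneg_of_mem_Icc
            constructor
            · linarith [(hθ01 (⟨i, him⟩ : Fin (jordanDim n' p k))).1, Real.pi_pos]
            · exact (hθ01 _).2
          have : a i * (1 - c * c) = 0 := by
            rw [hbv'] at hav'; ring_nf; nlinarith [hav']
          have hne : (1 - c * c) ≠ 0 := by nlinarith
          exact (mul_eq_zero.mp this).resolve_right hne
        · -- i ≥ k : a i = 0 since e i ⟂ F
          rw [hav]
          apply Finset.sum_eq_zero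
          intro j _
          rw [hinner i j, dif_neg, mul_zero]
          intro hcc; exact hik (hcc ▸ j.isLt)
      rw [← ha]
      apply Submodule.sum_mem
      intro i _
      by_cases hQi : Q i
      · exact Submodule.smul_mem _ _ (Submodule.subset_span ⟨i, hQi, rfl⟩)
      · rw [hzero i hQi, zero_smul]; exact Submodule.zero_mem _
    · rw [Submodule.span_le]
      rintro x ⟨i, hQi, rfl⟩
      refine ⟨?_, ?_⟩
      · rw [← hEe]; exact Submodule.subset_span ⟨i, rfl⟩
      · have hik : (i : ℕ) < k := lt_of_lt_of_le hQi.1 (min_le_left _ _)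
        rw [hef i hik hQi, ← hFf]
        exact Submodule.subset_span ⟨_, rfl⟩
  -- finrank of E ⊓ F
  have hli : LinearIndependent ℝ (fun i : {i : Fin p // Q i} => e i) :=
    he.linearIndependent.comp Subtype.val Subtype.val_injective
  have hrange : Set.range (fun i : {i : Fin p // Q i} => e i) = e '' {i | Q i} := by
    ext x
    constructor
    · rintro ⟨⟨i, hi⟩, rfl⟩; exact ⟨i, hi, rfl⟩
    · rintro ⟨i, hi, rfl⟩; exact ⟨⟨i, hi⟩, rfl⟩
  have hfinrank_inf : Module.finrank ℝ (E ⊓ F : Submodule ℝ W)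
      = Fintype.card {i : Fin p // Q i} := by
    rw [hinf, ← hrange]
    exact finrank_span_eq_card hli
  -- counting: card Q + ℓ = min k p
  have hcount : Fintype.card {i : Fin p // Q i}
      + Fintype.card {i : Fin (jordanDim n' p k) // θ i ≠ 0} = min k p := by
    have hequiv : ({i : Fin p // Q i} ⊕ {i : Fin (jordanDim n' p k) // θ i ≠ 0})
        ≃ Fin (min k p) := by
      apply Equiv.ofBijective (Sum.elim (fun i => ⟨(i.1 : ℕ), i.2.1⟩)
        (fun i => ⟨(i.1 : ℕ), lt_of_lt_of_le i.1.isLt hmmin⟩))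
      constructor
      · rintro (⟨i, hi⟩ | ⟨i, hi⟩) (⟨j, hj⟩ | ⟨j, hj⟩) hij <;>
          simp only [Sum.elim_inl, Sum.elim_inr, Fin.mk.injEq] at hij
        · exact congrArg _ (Subtype.ext (Fin.ext hij))
        · exact absurd (hi.2 (hij ▸ j.isLt)) (by
            have : (⟨(i : ℕ), hij ▸ j.isLt⟩ : Fin (jordanDim n' p k)) = j := Fin.ext hij
            rw [this]; exact hj)
        · exact absurd (hj.2 (hij ▸ i.isLt)) (by
            have : (⟨(j : ℕ), hij ▸ i.isLt⟩ : Fin (jordanDim n' p k)) = i := Fin.ext hij.symm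
            rw [this]; exact hi)
        · exact congrArg _ (Subtype.ext (Fin.ext hij))
      · intro x
        by_cases hx : ∃ h : (x : ℕ) < jordanDim n' p k, θ ⟨x, h⟩ ≠ 0
        · obtain ⟨h, hne⟩ := hx
          exact ⟨Sum.inr ⟨⟨x, h⟩, hne⟩, rfl⟩
        · push_neg at hx
          refine ⟨Sum.inl ⟨⟨x, lt_of_lt_of_le x.isLt (min_le_right _ _)⟩, ?_, ?_⟩, rfl⟩
          · exact x.isLt
          · exact hx
    have := Fintype.card_congr hequiv
    simpa [Fintype.card_sum] using this
  -- put it together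
  have hsum := Submodule.finrank_sup_add_finrank_inf_eq E F
  rw [hE, hF, hfinrank_inf] at hsum
  rw [Nat.card_eq_fintype_card]
  omega
end

section
/- Let W be an n-dimensional real inner product space and let E, F be subspaces of W with dim E = dim F = d. Let e_1,…,e_d and f_1,…,f_d be orthonormal bases of E and F respectively, and let e'_1,…,e'_{n−d} and f'_1,…,f'_{n−d} be orthonormal bases of E^⊥ and F^⊥ respectively. Then |det (⟨e_i, f_j⟩)_{1≤i,j≤d}| = |det (⟨e'_i, f'_j⟩)_{1≤i,j≤n−d}|. In other words, the absolute determinant of the matrix of the orthogonal projection from E onto F (in orthonormal bases) equals that of the orthogonal projection from E^⊥ onto F^⊥. -/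
open Matrix in
/-- For subspaces `E, F` of equal dimension `d` in an `n`-dimensional real inner product
space, the absolute determinant of the matrix of inner products of orthonormal bases of
`E` and `F` equals that of orthonormal bases of `E^⊥` and `F^⊥`. -/
theorem abs_det_proj_eq_abs_det_proj_orthComplement
    {W : Type*} [NormedAddCommGroup W] [InnerProductSpace ℝ W] [FiniteDimensional ℝ W]
    (n d : ℕ) (hW : Module.finrank ℝ W = n)
    (E F : Submodule ℝ W)
    (hE : Module.finrank ℝ E = d) (hF : Module.finrank ℝ F = d)
    (e f : Fin d → W) (e' f' : Fin (n - d) → W)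
    (he : Orthonormal ℝ e) (hespan : Submodule.span ℝ (Set.range e) = E)
    (hf : Orthonormal ℝ f) (hfspan : Submodule.span ℝ (Set.range f) = F)
    (he' : Orthonormal ℝ e') (he'span : Submodule.span ℝ (Set.range e') = Eᗮ)
    (hf' : Orthonormal ℝ f') (hf'span : Submodule.span ℝ (Set.range f') = Fᗮ) :
    |Matrix.det (Matrix.of fun i j => (inner ℝ (e i) (f j) : ℝ))| =
      |Matrix.det (Matrix.of fun i j => (inner ℝ (e' i) (f' j) : ℝ))| := by
  classical
  -- combined orthonormal families
  have memE : ∀ i, e i ∈ E := fun i => hespan ▸ Submodule.subset_span ⟨i, rfl⟩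
  have memE' : ∀ i, e' i ∈ Eᗮ := fun i => he'span ▸ Submodule.subset_span ⟨i, rfl⟩
  have memF : ∀ i, f i ∈ F := fun i => hfspan ▸ Submodule.subset_span ⟨i, rfl⟩
  have memF' : ∀ i, f' i ∈ Fᗮ := fun i => hf'span ▸ Submodule.subset_span ⟨i, rfl⟩
  have orth_sum : ∀ (K : Submodule ℝ W) (u v : Fin d → W) (u' v' : Fin (n-d) → W),
      Orthonormal ℝ u → Orthonormal ℝ u' → (∀ i, u i ∈ K) → (∀ i, u' i ∈ Kᗮ) →
      Orthonormal ℝ (Sum.elim u u') := by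
    intro K u v u' v' hu hu' hm hm'
    rw [orthonormal_iff_ite] at hu hu' ⊢
    rintro (i | i) (j | j) <;>
      simp only [Sum.elim_inl, Sum.elim_inr, Sum.inl.injEq, Sum.inr.injEq]
    · simpa using hu i j
    · simp [Submodule.inner_right_of_mem_orthogonal (hm i) (hm' j)]
    · simp [Submodule.inner_left_of_mem_orthogonal (hm j) (hm' i)]
    · simpa using hu' i j
  have hg : Orthonormal ℝ (Sum.elim e e') := orth_sum E e f e' f' he he' memE memE'
  have hh : Orthonormal ℝ (Sum.elim f f') := orth_sum F f f f' f' hf hf' memF memF'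
  have span_top : ∀ (K : Submodule ℝ W) (u : Fin d → W) (u' : Fin (n-d) → W),
      Submodule.span ℝ (Set.range u) = K → Submodule.span ℝ (Set.range u') = Kᗮ →
      Submodule.span ℝ (Set.range (Sum.elim u u')) = ⊤ := by
    intro K u u' hs hs'
    rw [Set.Sum.elim_range, Submodule.span_union, hs, hs',
      Submodule.sup_orthogonal_of_hasOrthogonalProjection]
  -- orthonormal bases
  let b : OrthonormalBasis (Fin d ⊕ Fin (n-d)) ℝ W :=
    (Module.Basis.mk hg.linearIndependent
      (by rw [span_top E e e' hespan he'span])).toOrthonormalBasis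
      (by rwa [Module.Basis.coe_mk])
  let c : OrthonormalBasis (Fin d ⊕ Fin (n-d)) ℝ W :=
    (Module.Basis.mk hh.linearIndependent
      (by rw [span_top F f f' hfspan hf'span])).toOrthonormalBasis
      (by rwa [Module.Basis.coe_mk])
  have hb : ∀ p, b p = Sum.elim e e' p := by
    intro p
    simp [b, Module.Basis.coe_toOrthonormalBasis, Module.Basis.coe_mk]
  have hc : ∀ p, c p = Sum.elim f f' p := by
    intro p
    simp [c, Module.Basis.coe_toOrthonormalBasis, Module.Basis.coe_mk]
  -- the big matrix
  set A : Matrix (Fin d) (Fin d) ℝ := Matrix.of fun i j => (inner ℝ (e i) (f j) : ℝ) with hA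
  set B : Matrix (Fin d) (Fin (n-d)) ℝ := Matrix.of fun i j => (inner ℝ (e i) (f' j) : ℝ)
  set C : Matrix (Fin (n-d)) (Fin d) ℝ := Matrix.of fun i j => (inner ℝ (e' i) (f j) : ℝ)
  set D : Matrix (Fin (n-d)) (Fin (n-d)) ℝ :=
    Matrix.of fun i j => (inner ℝ (e' i) (f' j) : ℝ) with hD
  set M : Matrix (Fin d ⊕ Fin (n-d)) (Fin d ⊕ Fin (n-d)) ℝ := Matrix.fromBlocks A B C D with hM
  have hMentry : ∀ p q, M p q = (inner ℝ (b p) (c q) : ℝ) := by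
    rintro (i | i) (j | j) <;> simp [hM, hb, hc, A, B, C, D]
  -- M is orthogonal: Mᵀ * M = 1
  have hMTM : Mᵀ * M = 1 := by
    ext p q
    simp only [Matrix.mul_apply, Matrix.transpose_apply]
    have := b.sum_inner_mul_inner (c p) (c q)
    calc ∑ r, M r p * M r q = ∑ r, inner ℝ (c p) (b r) * inner ℝ (b r) (c q) := by
          refine Finset.sum_congr rfl fun r _ => ?_
          rw [hMentry, hMentry, real_inner_comm (b r) (c p)]
      _ = (inner ℝ (c p) (c q) : ℝ) := this
      _ = (1 : Matrix _ _ ℝ) p q := by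
          rcases eq_or_ne p q with h | h
          · subst h
            simp [Matrix.one_apply_eq, real_inner_self_eq_norm_sq, c.orthonormal.1 p]
          · simp [c.orthonormal.2 h, Matrix.one_apply, h]
  have hMMT : M * Mᵀ = 1 := mul_eq_one_comm.mp hMTM
  -- extract block identities from M * Mᵀ = 1
  have hblocks : Matrix.fromBlocks (A * Aᵀ + B * Bᵀ) (A * Cᵀ + B * Dᵀ)
      (C * Aᵀ + D * Bᵀ) (C * Cᵀ + D * Dᵀ)
      = Matrix.fromBlocks (1 : Matrix (Fin d) (Fin d) ℝ) 0 0
        (1 : Matrix (Fin (n-d)) (Fin (n-d)) ℝ) := by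
    rw [Matrix.fromBlocks_one]
    rw [hM] at hMMT
    rw [Matrix.fromBlocks_transpose, Matrix.fromBlocks_multiply] at hMMT
    exact hMMT
  have h12 : A * Cᵀ + B * Dᵀ = 0 := by
    have := congrArg Matrix.toBlocks₁₂ hblocks
    simpa only [Matrix.toBlocks_fromBlocks₁₂] using this
  have h22 : C * Cᵀ + D * Dᵀ = 1 := by
    have := congrArg Matrix.toBlocks₂₂ hblocks
    simpa only [Matrix.toBlocks_fromBlocks₂₂] using this
  -- key determinant identity
  have key : M * Matrix.fromBlocks 1 Cᵀ 0 Dᵀ = Matrix.fromBlocks A 0 C 1 := by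
    rw [hM, Matrix.fromBlocks_multiply]
    congr 1 <;> simp [h12, h22]
  have hdet : M.det * D.det = A.det := by
    have := congrArg Matrix.det key
    rw [Matrix.det_mul, Matrix.det_fromBlocks_zero₂₁, Matrix.det_fromBlocks_zero₁₂,
      Matrix.det_transpose] at this
    simpa using this
  have hdetM : |M.det| = 1 := by
    have h2 : M.det * M.det = 1 := by
      have := congrArg Matrix.det hMTM
      rwa [Matrix.det_mul, Matrix.det_transpose, Matrix.det_one] at this
    rcases mul_self_eq_one_iff.mp h2 with h | h <;> simp [h]
  calc |A.det| = |M.det * D.det| := by rw [hdet]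
    _ = |M.det| * |D.det| := abs_mul _ _
    _ = |D.det| := by rw [hdetM, one_mul]
end

section
/- Let p ≥ 1 and let V := ℝ^p with its standard inner product. Let 0 ≤ i, j ≤ p and let φ be a real-valued map on V^i × V^j that is multilinear in all i + j vector arguments, alternating in the first i arguments, alternating in the last j arguments, and SO(p)-invariant: φ(g v_1, …, g v_i; g w_1, …, g w_j) = φ(v_1,…,v_i; w_1,…,w_j) for every rotation g ∈ SO(p). Then there exist constants c_1, c_2 ∈ ℝ such that for all v_1,…,v_i, w_1,…,w_j ∈ V: φ(v; w) = c_1 · [i = j] · det(⟨v_a, w_b⟩)_{1≤a,b≤i} + c_2 · [i + j = p] · det(v_1, …, v_i, w_1, …, w_j), where [P] is 1 if P holds and 0 otherwise, det(⟨v_a, w_b⟩) is the determinant of the i×i Gram-type matrix of inner products (this term appears only when i = j), and det(v_1,…,v_i,w_1,…,w_j) is the determinant of the p×p matrix with these columns (this term appears only when i + j = p). In particular, if i ≠ j and i + j ≠ p, then φ = 0. -/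
open Matrix BigOperators

namespace SOInvAux

noncomputable section

variable (p : ℕ)

abbrev V := EuclideanSpace ℝ (Fin p)

abbrev B : Module.Basis (Fin p) ℝ (V p) := (EuclideanSpace.basisFun (Fin p) ℝ).toBasis

lemma B_apply (m : Fin p) : B p m = EuclideanSpace.single m 1 := by
  simp [B, EuclideanSpace.basisFun_apply]

lemma B_apply_coord (m r : Fin p) : (B p m) r = if r = m then 1 else 0 := by
  rw [B_apply]; simp [EuclideanSpace.single_apply]

variable {p}

/-- The linear equivalence `x ↦ fun r => d r * x (π.symm r)`. -/
def rotEquiv (π : Equiv.Perm (Fin p)) (d : Fin p → ℝ) (hd : ∀ r, d r = 1 ∨ d r = -1) :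
    V p ≃ₗ[ℝ] V p :=
  (WithLp.linearEquiv 2 ℝ (Fin p → ℝ)).trans <|
    (LinearEquiv.piCongrLeft' ℝ (fun _ : Fin p => ℝ) π).trans <|
      (LinearEquiv.piCongrRight (fun r => LinearEquiv.smulOfNeZero ℝ ℝ (d r)
        (by rcases hd r with h | h <;> rw [h] <;> norm_num))).trans
        (WithLp.linearEquiv 2 ℝ (Fin p → ℝ)).symm

lemma rotEquiv_apply (π : Equiv.Perm (Fin p)) (d : Fin p → ℝ) (hd : ∀ r, d r = 1 ∨ d r = -1)
    (x : V p) (r : Fin p) : rotEquiv π d hd x r = d r * x (π.symm r) := by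
  simp [rotEquiv, LinearEquiv.smulOfNeZero, LinearEquiv.smulOfUnit, Units.smul_def,
    LinearEquiv.piCongrLeft'_apply, smul_eq_mul]

/-- `rotEquiv` as a linear isometry equivalence. -/
def rotD (π : Equiv.Perm (Fin p)) (d : Fin p → ℝ) (hd : ∀ r, d r = 1 ∨ d r = -1) :
    V p ≃ₗᵢ[ℝ] V p := by
  refine (rotEquiv π d hd).isometryOfInner fun x y => ?_
  simp only [PiLp.inner_apply, RCLike.inner_apply, conj_trivial, rotEquiv_apply]
  rw [← Equiv.sum_comp π.symm (fun r => y r * x r)]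
  refine Finset.sum_congr rfl fun r _ => ?_
  rcases hd r with h | h <;> rw [h] <;> ring

lemma rotD_apply (π : Equiv.Perm (Fin p)) (d : Fin p → ℝ) (hd : ∀ r, d r = 1 ∨ d r = -1)
    (x : V p) (r : Fin p) : rotD π d hd x r = d r * x (π.symm r) := by
  have : rotD π d hd x = rotEquiv π d hd x := rfl
  rw [this, rotEquiv_apply]

lemma rotD_basis (π : Equiv.Perm (Fin p)) (d : Fin p → ℝ) (hd : ∀ r, d r = 1 ∨ d r = -1)
    (m : Fin p) : rotD π d hd (B p m) = d (π m) • B p (π m) := by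
  ext r
  have : (d (π m) • B p (π m)) r = d (π m) * (B p (π m)) r := rfl
  rw [rotD_apply, this, B_apply_coord, B_apply_coord]
  by_cases h : r = π m
  · subst h; simp [Equiv.symm_apply_apply]
  · have h2 : ¬ π.symm r = m := fun hc => h (by rw [← hc, Equiv.apply_symm_apply])
    simp [h, h2]

lemma rotD_det (π : Equiv.Perm (Fin p)) (d : Fin p → ℝ) (hd : ∀ r, d r = 1 ∨ d r = -1) :
    LinearMap.det ((rotD π d hd).toLinearEquiv :
      EuclideanSpace ℝ (Fin p) →ₗ[ℝ] EuclideanSpace ℝ (Fin p)) =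
      (∏ r, d r) * ((Equiv.Perm.sign π : ℤ) : ℝ) := by
  have h1 : (rotD π d hd).toLinearEquiv = rotEquiv π d hd :=
    LinearEquiv.isometryOfInner_toLinearEquiv _ _
  rw [h1]
  rw [← LinearMap.det_toMatrix (B p)]
  have hmat : LinearMap.toMatrix (B p) (B p) (rotEquiv π d hd : V p →ₗ[ℝ] V p)
      = Matrix.diagonal d * Equiv.Perm.permMatrix ℝ π⁻¹ := by
    ext r m
    rw [LinearMap.toMatrix_apply]
    have : (rotEquiv π d hd : V p →ₗ[ℝ] V p) (B p m) = rotD π d hd (B p m) := rfl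
    rw [this, rotD_basis]
    have hrepr : (B p).repr (d (π m) • B p (π m)) r
        = d (π m) * ((B p).repr (B p (π m)) r) := by
      rw [_root_.map_smul, Finsupp.smul_apply, smul_eq_mul]
    rw [hrepr, Module.Basis.repr_self]
    rw [Matrix.diagonal_mul]
    simp only [Equiv.Perm.permMatrix, PEquiv.toMatrix_apply, Equiv.toPEquiv_apply,
      Option.mem_def, Option.some.injEq]
    by_cases h : r = π m
    · subst h
      simp [Finsupp.single_apply, Equiv.symm_apply_apply]
    · have h2 : ¬ π⁻¹ r = m := fun hc => h (by rw [← hc]; simp)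
      simp [Finsupp.single_apply, h, h2, Ne.symm h]
      exact fun hc => absurd hc h2
  rw [hmat, Matrix.det_mul, Matrix.det_diagonal, Matrix.det_permutation]
  simp

section Star

variable {p : ℕ} {i j : ℕ}
variable (φ : (EuclideanSpace ℝ (Fin p)) [⋀^Fin i]→ₗ[ℝ]
          ((EuclideanSpace ℝ (Fin p)) [⋀^Fin j]→ₗ[ℝ] ℝ))

lemma map_smul_tuples (c : Fin i → ℝ) (u : Fin i → V p) (e : Fin j → ℝ) (z : Fin j → V p) :
    φ (fun a => c a • u a) (fun b => e b • z b)
      = ((∏ a, c a) * ∏ b, e b) * φ u z := by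
  have h1 : φ (fun a => c a • u a) = (∏ a, c a) • φ u := by
    exact φ.toMultilinearMap.map_smul_univ c u
  rw [h1]
  have h2 : ((∏ a, c a) • φ u) (fun b => e b • z b)
      = (∏ a, c a) • ((φ u) (fun b => e b • z b)) := rfl
  rw [h2, show ((φ u) fun b => e b • z b) = (∏ b, e b) • (φ u) z from
    (φ u).toMultilinearMap.map_smul_univ e z]
  simp [smul_eq_mul]; ring

lemma star_lemma
    (hinv : ∀ g : EuclideanSpace ℝ (Fin p) ≃ₗᵢ[ℝ] EuclideanSpace ℝ (Fin p),
      LinearMap.det (g.toLinearEquiv :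
        EuclideanSpace ℝ (Fin p) →ₗ[ℝ] EuclideanSpace ℝ (Fin p)) = 1 →
      ∀ (v : Fin i → EuclideanSpace ℝ (Fin p)) (w : Fin j → EuclideanSpace ℝ (Fin p)),
        φ (fun a => g (v a)) (fun b => g (w b)) = φ v w)
    (π : Equiv.Perm (Fin p)) (d : Fin p → ℝ) (hd : ∀ r, d r = 1 ∨ d r = -1)
    (hdet : (∏ r, d r) * ((Equiv.Perm.sign π : ℤ) : ℝ) = 1)
    (f : Fin i → Fin p) (g : Fin j → Fin p) :
    φ (fun a => B p (f a)) (fun b => B p (g b)) =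
      ((∏ a, d (π (f a))) * ∏ b, d (π (g b))) *
        φ (fun a => B p (π (f a))) (fun b => B p (π (g b))) := by
  have h1 := hinv (rotD π d hd) (by rw [rotD_det]; exact hdet)
    (fun a => B p (f a)) (fun b => B p (g b))
  calc φ (fun a => B p (f a)) (fun b => B p (g b))
      = φ (fun a => rotD π d hd (B p (f a))) (fun b => rotD π d hd (B p (g b))) := h1.symm
    _ = φ (fun a => d (π (f a)) • B p (π (f a))) (fun b => d (π (g b)) • B p (π (g b))) := by
        simp only [rotD_basis]
    _ = _ := map_smul_tuples φ _ _ _ _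

end Star

section Bundles

variable {p i j : ℕ}

/-- Row map: `x ↦ (fun a => ⟪v a, x⟫)`. -/
def gramRow (v : Fin i → V p) : V p →ₗ[ℝ] (Fin i → ℝ) :=
  LinearMap.pi fun a => ((innerSL ℝ (v a)).toLinearMap)

/-- For fixed `v`, the map `w ↦ det (⟪v a, w b⟫)_{b a}`, alternating in `w`. -/
def gramAlt (v : Fin i → V p) : (V p) [⋀^Fin i]→ₗ[ℝ] ℝ :=
  Matrix.detRowAlternating.compLinearMap (gramRow v)

lemma gramAlt_apply (v w : Fin i → V p) :
    gramAlt v w = Matrix.det (Matrix.of fun b a => (inner ℝ (v a) (w b) : ℝ)) := rfl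

lemma gramAlt_symm (v w : Fin i → V p) : gramAlt v w = gramAlt w v := by
  rw [gramAlt_apply, gramAlt_apply, ← Matrix.det_transpose]
  congr 1
  ext b a
  simp only [Matrix.transpose_apply, Matrix.of_apply]
  exact real_inner_comm _ _

/-- The Gram determinant, bundled as a nested alternating map. -/
def gram : (V p) [⋀^Fin i]→ₗ[ℝ] ((V p) [⋀^Fin i]→ₗ[ℝ] ℝ) where
  toFun v := gramAlt v
  map_update_add' v a x y := by
    ext w
    show gramAlt _ w = gramAlt _ w + gramAlt _ w
    rw [gramAlt_symm _ w, gramAlt_symm _ w, gramAlt_symm _ w]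
    exact (gramAlt w).map_update_add v a x y
  map_update_smul' v a c x := by
    ext w
    show gramAlt _ w = c • gramAlt _ w
    rw [gramAlt_symm _ w, gramAlt_symm _ w]
    exact (gramAlt w).map_update_smul v a c x
  map_eq_zero_of_eq' v a a' hv haa' := by
    ext w
    show gramAlt _ w = 0
    rw [gramAlt_symm _ w]
    exact (gramAlt w).map_eq_zero_of_eq v hv haa'

lemma gram_apply (v w : Fin i → V p) :
    gram v w = Matrix.det (Matrix.of fun a b => (inner ℝ (v a) (w b) : ℝ)) := by
  show gramAlt v w = _
  rw [gramAlt_apply, ← Matrix.det_transpose]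
  congr 1

/-- Splitting an alternating map on a sum type into a nested alternating map. -/
def splitAlt {ι κ M N : Type*} [DecidableEq ι] [DecidableEq κ]
    [AddCommMonoid M] [Module ℝ M] [AddCommMonoid N] [Module ℝ N]
    (F : M [⋀^(ι ⊕ κ)]→ₗ[ℝ] N) : M [⋀^ι]→ₗ[ℝ] (M [⋀^κ]→ₗ[ℝ] N) where
  toFun v :=
  { toFun := fun w => F (Sum.elim v w)
    map_update_add' := fun w b x y => by
      simp only [← Sum.update_elim_inr]
      exact F.map_update_add _ _ _ _
    map_update_smul' := fun w b c x => by
      simp only [← Sum.update_elim_inr]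
      exact F.map_update_smul _ _ _ _
    map_eq_zero_of_eq' := fun w b b' hw hbb' =>
      F.map_eq_zero_of_eq (Sum.elim v w) (i := Sum.inr b) (j := Sum.inr b')
        (by simpa using hw) (by simpa using hbb') }
  map_update_add' v a x y := by
    ext w
    show F (Sum.elim (Function.update v a (x + y)) w) = _
    simp only [← Sum.update_elim_inl]
    exact F.map_update_add _ _ _ _
  map_update_smul' v a c x := by
    ext w
    show F (Sum.elim (Function.update v a (c • x)) w) = _
    simp only [← Sum.update_elim_inl]
    exact F.map_update_smul _ _ _ _
  map_eq_zero_of_eq' v a a' hv haa' := by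
    ext w
    show F (Sum.elim v w) = 0
    exact F.map_eq_zero_of_eq (Sum.elim v w) (i := Sum.inl a) (j := Sum.inl a')
      (by simpa using hv) (by simpa using haa')

lemma splitAlt_apply {ι κ M N : Type*} [DecidableEq ι] [DecidableEq κ]
    [AddCommMonoid M] [Module ℝ M] [AddCommMonoid N] [Module ℝ N]
    (F : M [⋀^(ι ⊕ κ)]→ₗ[ℝ] N) (v : ι → M) (w : κ → M) :
    splitAlt F v w = F (Sum.elim v w) := rfl

/-- The coordinate projection of Euclidean space. -/
def toPi : V p →ₗ[ℝ] (Fin p → ℝ) := (WithLp.linearEquiv 2 ℝ (Fin p → ℝ)).toLinearMap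

/-- The full `p × p` determinant, bundled as a nested alternating map. -/
def detSplit (h : i + j = p) : (V p) [⋀^Fin i]→ₗ[ℝ] ((V p) [⋀^Fin j]→ₗ[ℝ] ℝ) :=
  splitAlt ((Matrix.detRowAlternating.compLinearMap toPi).domDomCongr
    ((finSumFinEquiv.trans (finCongr h)).symm))

lemma detSplit_apply (h : i + j = p) (v : Fin i → V p) (w : Fin j → V p) :
    detSplit h v w = Matrix.det (Matrix.of fun (r : Fin p) (c : Fin p) =>
      Sum.elim v w ((finSumFinEquiv.trans (finCongr h)).symm c) r) := by
  rw [detSplit, splitAlt_apply]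
  show Matrix.det (Matrix.of fun (r : Fin p) =>
    toPi (Sum.elim v w ((finSumFinEquiv.trans (finCongr h)).symm r))) = _
  rw [← Matrix.det_transpose]
  congr 1

end Bundles
section Helpers

variable {p i j n : ℕ}

lemma exists_perm_comp (f f' : Fin n → Fin p) (hf : Function.Injective f)
    (hf' : Function.Injective f') : ∃ π : Equiv.Perm (Fin p), ∀ a, π (f a) = f' a := by
  classical
  let e : {x // x ∈ Set.range f} ≃ {x // x ∈ Set.range f'} :=
    (Equiv.ofInjective f hf).symm.trans (Equiv.ofInjective f' hf')
  refine ⟨e.extendSubtype, fun a => ?_⟩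
  rw [Equiv.extendSubtype_apply_of_mem e (f a) ⟨a, rfl⟩]
  show ((Equiv.ofInjective f' hf') ((Equiv.ofInjective f hf).symm ⟨f a, ⟨a, rfl⟩⟩) : Fin p) = f' a
  have : (⟨f a, ⟨a, rfl⟩⟩ : {x // x ∈ Set.range f}) = Equiv.ofInjective f hf a := by
    ext; simp [Equiv.ofInjective_apply]
  rw [this, Equiv.symm_apply_apply, Equiv.ofInjective_apply]

lemma prod_ite_inj (f : Fin n → Fin p) (hf : Function.Injective f) (k : Fin p) :
    (∏ a, if f a = k then (-1 : ℝ) else 1) = if k ∈ Set.range f then -1 else 1 := by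
  classical
  by_cases h : k ∈ Set.range f
  · rw [if_pos h]
    obtain ⟨a₀, rfl⟩ := h
    rw [Finset.prod_eq_single a₀ (fun a _ ha => if_neg (fun hc => ha (hf hc)))
      (fun h => absurd (Finset.mem_univ a₀) h)]
    rw [if_pos rfl]
  · rw [if_neg h]
    exact Finset.prod_eq_one (fun a _ => if_neg (fun hc => h ⟨a, hc⟩))

lemma inner_B (m m' : Fin p) : (inner ℝ (B p m) (B p m') : ℝ) = if m = m' then 1 else 0 := by
  rw [B_apply, B_apply, EuclideanSpace.inner_single_left]
  by_cases h : m = m'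
  · simp [EuclideanSpace.single_apply, h]
  · simp [EuclideanSpace.single_apply, h, Ne.symm h]

lemma sum_elim_B (f : Fin i → Fin p) (g : Fin j → Fin p) (x : Fin i ⊕ Fin j) :
    Sum.elim (fun a => B p (f a)) (fun b => B p (g b)) x = B p (Sum.elim f g x) := by
  cases x <;> rfl

lemma gram_basis_zero (f g : Fin i → Fin p)
    (h : (∃ b, g b ∉ Set.range f) ∨ (∃ a, f a ∉ Set.range g)) :
    gram (fun a => B p (f a)) (fun b => B p (g b)) = 0 := by
  rw [gram_apply]
  rcases h with ⟨b₀, hb⟩ | ⟨a₀, ha⟩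
  · refine Matrix.det_eq_zero_of_column_eq_zero b₀ (fun a => ?_)
    rw [Matrix.of_apply, inner_B, if_neg (fun hc => hb ⟨a, hc⟩)]
  · refine Matrix.det_eq_zero_of_row_eq_zero a₀ (fun b => ?_)
    rw [Matrix.of_apply, inner_B, if_neg (fun hc => ha ⟨b, hc.symm⟩)]

lemma detSplit_basis_entry (h2 : i + j = p) (f : Fin i → Fin p) (g : Fin j → Fin p)
    (r c : Fin p) :
    (Matrix.of fun (r : Fin p) (c : Fin p) =>
      Sum.elim (fun a => B p (f a)) (fun b => B p (g b))
        ((finSumFinEquiv.trans (finCongr h2)).symm c) r) r c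
    = if r = Sum.elim f g ((finSumFinEquiv.trans (finCongr h2)).symm c) then 1 else 0 := by
  rw [Matrix.of_apply, sum_elim_B, B_apply_coord]

lemma detSplit_basis_zero (h2 : i + j = p) (f : Fin i → Fin p) (g : Fin j → Fin p)
    (h : (∃ x, x ∉ Set.range f ∧ x ∉ Set.range g) ∨ (∃ a b, f a = g b)) :
    detSplit h2 (fun a => B p (f a)) (fun b => B p (g b)) = 0 := by
  rw [detSplit_apply]
  set σ := (finSumFinEquiv.trans (finCongr h2)).symm with hσ
  rcases h with ⟨x, hxf, hxg⟩ | ⟨a, b, hab⟩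
  · refine Matrix.det_eq_zero_of_row_eq_zero x (fun c => ?_)
    rw [detSplit_basis_entry h2 f g x c, if_neg ?_]
    rcases hc : σ c with a | b
    · simp only [Sum.elim_inl]; exact fun hx => hxf ⟨a, hx.symm⟩
    · simp only [Sum.elim_inr]; exact fun hx => hxg ⟨b, hx.symm⟩
  · refine Matrix.det_zero_of_column_eq (i := σ.symm (Sum.inl a)) (j := σ.symm (Sum.inr b))
      (fun hc => by simpa using σ.symm.injective hc) (fun k => ?_)
    rw [detSplit_basis_entry h2 f g k _, detSplit_basis_entry h2 f g k _,
      Equiv.apply_symm_apply, Equiv.apply_symm_apply]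
    simp only [Sum.elim_inl, Sum.elim_inr, hab]
    exact if_congr Iff.rfl rfl rfl

lemma caseA (φ : (EuclideanSpace ℝ (Fin p)) [⋀^Fin i]→ₗ[ℝ]
      ((EuclideanSpace ℝ (Fin p)) [⋀^Fin j]→ₗ[ℝ] ℝ))
    (hinv : ∀ g : EuclideanSpace ℝ (Fin p) ≃ₗᵢ[ℝ] EuclideanSpace ℝ (Fin p),
      LinearMap.det (g.toLinearEquiv :
        EuclideanSpace ℝ (Fin p) →ₗ[ℝ] EuclideanSpace ℝ (Fin p)) = 1 →
      ∀ (v : Fin i → EuclideanSpace ℝ (Fin p)) (w : Fin j → EuclideanSpace ℝ (Fin p)),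
        φ (fun a => g (v a)) (fun b => g (w b)) = φ v w)
    (f : Fin i → Fin p) (g : Fin j → Fin p) (hf : Function.Injective f)
    (hg : Function.Injective g) (k l : Fin p)
    (hk : k ∈ Set.range f ↔ k ∈ Set.range g)
    (hl : ¬(l ∈ Set.range f ↔ l ∈ Set.range g)) :
    φ (fun a => B p (f a)) (fun b => B p (g b)) = 0 := by
  classical
  have hkl : k ≠ l := fun hc => hl (hc ▸ hk)
  set d : Fin p → ℝ := fun r => (if r = k then (-1 : ℝ) else 1) * (if r = l then -1 else 1)
    with hdd
  have hd : ∀ r, d r = 1 ∨ d r = -1 := by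
    intro r; rw [hdd]; dsimp only; split_ifs <;> norm_num
  have hprod : (∏ r, d r) = 1 := by
    rw [hdd]
    rw [Finset.prod_mul_distrib, Finset.prod_ite_eq' Finset.univ k (fun _ => (-1 : ℝ)),
      Finset.prod_ite_eq' Finset.univ l (fun _ => (-1 : ℝ))]
    simp
  have hdet : (∏ r, d r) * ((Equiv.Perm.sign (1 : Equiv.Perm (Fin p)) : ℤ) : ℝ) = 1 := by
    rw [hprod]; simp
  have hstar := star_lemma φ hinv 1 d hd hdet f g
  simp only [Equiv.Perm.coe_one, id_eq] at hstar
  have hpf : (∏ a, d (f a)) = (if k ∈ Set.range f then (-1 : ℝ) else 1) *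
      (if l ∈ Set.range f then -1 else 1) := by
    rw [hdd]; dsimp only
    rw [Finset.prod_mul_distrib, prod_ite_inj f hf k, prod_ite_inj f hf l]
  have hpg : (∏ b, d (g b)) = (if k ∈ Set.range g then (-1 : ℝ) else 1) *
      (if l ∈ Set.range g then -1 else 1) := by
    rw [hdd]; dsimp only
    rw [Finset.prod_mul_distrib, prod_ite_inj g hg k, prod_ite_inj g hg l]
  rw [hpf, hpg] at hstar
  have e1 : k ∈ Set.range g ↔ k ∈ Set.range f := hk.symm
  have e2 : l ∈ Set.range g ↔ ¬ l ∈ Set.range f := by tauto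
  have hneg : φ (fun a => B p (f a)) (fun b => B p (g b))
      = - φ (fun a => B p (f a)) (fun b => B p (g b)) := by
    nth_rewrite 1 [hstar]
    simp only [e1, e2]
    by_cases h1 : k ∈ Set.range f <;> by_cases h2 : l ∈ Set.range f <;>
      simp [h1, h2] <;> ring
  linarith

end Helpers
section CaseB

variable {p i : ℕ}

lemma caseB (hp : 1 ≤ p) (hi : i ≤ p)
    (φ : (EuclideanSpace ℝ (Fin p)) [⋀^Fin i]→ₗ[ℝ]
      ((EuclideanSpace ℝ (Fin p)) [⋀^Fin i]→ₗ[ℝ] ℝ))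
    (hinv : ∀ g : EuclideanSpace ℝ (Fin p) ≃ₗᵢ[ℝ] EuclideanSpace ℝ (Fin p),
      LinearMap.det (g.toLinearEquiv :
        EuclideanSpace ℝ (Fin p) →ₗ[ℝ] EuclideanSpace ℝ (Fin p)) = 1 →
      ∀ (v : Fin i → EuclideanSpace ℝ (Fin p)) (w : Fin i → EuclideanSpace ℝ (Fin p)),
        φ (fun a => g (v a)) (fun b => g (w b)) = φ v w)
    (f g : Fin i → Fin p) (hf : Function.Injective f) (hg : Function.Injective g)
    (hr : Set.range f = Set.range g)
    (vstd : Fin i → Fin p) (hv : ∀ a, (vstd a : ℕ) = (a : ℕ)) :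
    φ (fun a => B p (f a)) (fun b => B p (g b))
      = gram (fun a => B p (f a)) (fun b => B p (g b))
          * φ (fun a => B p (vstd a)) (fun b => B p (vstd b)) := by
  classical
  have hvstd : vstd = fun a => Fin.castLE hi a := by
    funext a; exact Fin.ext (by rw [hv a]; rfl)
  subst hvstd
  rcases Nat.eq_zero_or_pos i with h0 | hpos
  · subst h0
    have hempty : ∀ u u' : Fin 0 → EuclideanSpace ℝ (Fin p), u = u' :=
      fun u u' => funext fun a => a.elim0
    rw [hempty (fun a => B p (f a)) (fun a => B p (Fin.castLE hi a)),
      hempty (fun b => B p (g b)) (fun b => B p (Fin.castLE hi b)), gram_apply]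
    rw [show (Matrix.of fun a b => (inner ℝ (B p (Fin.castLE hi a)) (B p (Fin.castLE hi b)) : ℝ)).det
      = 1 from Matrix.det_fin_zero]
    ring
  · set i0 : Fin i := ⟨0, hpos⟩ with hi0
    obtain ⟨π, hπ⟩ := exists_perm_comp f (fun a => Fin.castLE hi a) hf
      (fun a a' h => Fin.castLE_injective hi h)
    set τ : Fin i ≃ Fin i := (Equiv.ofInjective g hg).trans
      ((Equiv.setCongr hr.symm).trans (Equiv.ofInjective f hf).symm) with hτdef
    have hτ : ∀ b, f (τ b) = g b := by
      intro b
      show f ((Equiv.ofInjective f hf).symm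
        (Equiv.setCongr hr.symm (Equiv.ofInjective g hg b))) = g b
      rw [Equiv.apply_ofInjective_symm hf]
      rfl
    set ε : ℝ := ((Equiv.Perm.sign π : ℤ) : ℝ) with hεdef
    have hε : ε = 1 ∨ ε = -1 := by
      rcases Int.units_eq_one_or (Equiv.Perm.sign π) with h | h <;> rw [hεdef, h] <;> norm_num
    set t0 : Fin p := Fin.castLE hi i0 with ht0
    set d : Fin p → ℝ := fun r => if r = t0 then ε else 1 with hdd
    have hd : ∀ r, d r = 1 ∨ d r = -1 := by
      intro r; rw [hdd]; dsimp only; split_ifs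
      · exact hε
      · left; rfl
    have hprod : ∏ r, d r = ε := by
      rw [hdd]; dsimp only
      rw [Finset.prod_ite_eq' Finset.univ t0 (fun _ => ε)]; simp
    have hdet : (∏ r, d r) * ((Equiv.Perm.sign π : ℤ) : ℝ) = 1 := by
      rw [hprod, ← hεdef]; rcases hε with h | h <;> rw [h] <;> norm_num
    have hstar := star_lemma φ hinv π d hd hdet f g
    have hπg : ∀ b, π (g b) = Fin.castLE hi (τ b) := fun b => by rw [← hτ b, hπ]
    have hcond : ∀ a : Fin i, (Fin.castLE hi a = t0) ↔ (a = i0) :=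
      fun a => ⟨fun h => Fin.castLE_injective hi (h.trans ht0.symm ▸ h), fun h => by rw [h, ht0]⟩
    have hp1 : (∏ a, d (π (f a))) = ε := by
      simp only [hπ, hdd]
      rw [Finset.prod_congr rfl (fun a _ => if_congr (hcond a) rfl rfl),
        Finset.prod_ite_eq' Finset.univ i0 (fun _ => ε)]
      simp
    have hp2 : (∏ b, d (π (g b))) = ε := by
      simp only [hπg, hdd]
      rw [Finset.prod_congr rfl (fun b _ => if_congr (hcond (τ b)) rfl rfl),
        Equiv.prod_comp τ (fun a => if a = i0 then ε else 1),
        Finset.prod_ite_eq' Finset.univ i0 (fun _ => ε)]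
      simp
    have htup1 : (fun a => B p (π (f a))) = (fun a => B p (Fin.castLE hi a)) :=
      funext fun a => by rw [hπ]
    have htup2 : (fun b => B p (π (g b))) = (fun b => B p (Fin.castLE hi (τ b))) :=
      funext fun b => by rw [hπg]
    rw [htup1, htup2, hp1, hp2] at hstar
    have hperm := (φ (fun a => B p (Fin.castLE hi a))).map_perm
      (fun b => B p (Fin.castLE hi b)) τ
    rw [show (fun b => B p (Fin.castLE hi (τ b)))
      = (fun b => B p (Fin.castLE hi b)) ∘ τ from rfl, hperm] at hstar
    have hgram : gram (fun a => B p (f a)) (fun b => B p (g b))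
        = ((Equiv.Perm.sign τ : ℤ) : ℝ) := by
      rw [gram_apply]
      have hiff : ∀ (a b : Fin i), (f a = g b) ↔ (τ⁻¹ a = b) := by
        intro a b
        rw [← hτ b]
        constructor
        · intro h; rw [hf h]; simp
        · intro h; rw [← h]; congr 1; simp
      have hmat : (Matrix.of fun a b => (inner ℝ (B p (f a)) (B p (g b)) : ℝ))
          = Equiv.Perm.permMatrix ℝ τ⁻¹ := by
        ext a b
        rw [Matrix.of_apply, inner_B]
        simp only [Equiv.Perm.permMatrix, PEquiv.toMatrix_apply, Equiv.toPEquiv_apply,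
          Option.mem_def, Option.some.injEq]
        rw [if_congr ((hiff a b).trans (eq_comm)) rfl rfl]
        exact if_congr eq_comm rfl rfl
      rw [hmat, Matrix.det_permutation, Equiv.Perm.sign_inv]
    rw [hgram, hstar]
    have hee : ε * ε = 1 := by rcases hε with h | h <;> rw [h] <;> norm_num
    rw [hee, one_mul]
    rcases Int.units_eq_one_or (Equiv.Perm.sign τ) with h | h <;> rw [h] <;> simp

end CaseB
section CaseC

variable {p i j : ℕ}

lemma caseC (hp : 1 ≤ p) (h2 : i + j = p)
    (φ : (EuclideanSpace ℝ (Fin p)) [⋀^Fin i]→ₗ[ℝ]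
      ((EuclideanSpace ℝ (Fin p)) [⋀^Fin j]→ₗ[ℝ] ℝ))
    (hinv : ∀ g : EuclideanSpace ℝ (Fin p) ≃ₗᵢ[ℝ] EuclideanSpace ℝ (Fin p),
      LinearMap.det (g.toLinearEquiv :
        EuclideanSpace ℝ (Fin p) →ₗ[ℝ] EuclideanSpace ℝ (Fin p)) = 1 →
      ∀ (v : Fin i → EuclideanSpace ℝ (Fin p)) (w : Fin j → EuclideanSpace ℝ (Fin p)),
        φ (fun a => g (v a)) (fun b => g (w b)) = φ v w)
    (f : Fin i → Fin p) (g : Fin j → Fin p) (hf : Function.Injective f)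
    (hg : Function.Injective g) (hdisj : ∀ a b, f a ≠ g b)
    (vstd : Fin i → Fin p) (hv : ∀ a, (vstd a : ℕ) = (a : ℕ))
    (wstd : Fin j → Fin p) (hw : ∀ b, (wstd b : ℕ) = i + (b : ℕ)) :
    φ (fun a => B p (f a)) (fun b => B p (g b))
      = detSplit h2 (fun a => B p (f a)) (fun b => B p (g b))
          * φ (fun a => B p (vstd a)) (fun b => B p (wstd b)) := by
  classical
  have hi : i ≤ p := by omega
  have hvstd : vstd = fun a => Fin.castLE hi a := by
    funext a; exact Fin.ext (by rw [hv a]; rfl)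
  have hwstd : wstd = fun b : Fin j => (⟨i + (b : ℕ), by omega⟩ : Fin p) := by
    funext b; exact Fin.ext (by rw [hw b])
  subst hvstd; subst hwstd
  set σ : Fin p ≃ Fin i ⊕ Fin j := (finSumFinEquiv.trans (finCongr h2)).symm with hσdef
  have hσsymm1 : ∀ a : Fin i, σ.symm (Sum.inl a) = Fin.castLE hi a := by
    intro a
    show (finSumFinEquiv.trans (finCongr h2)) (Sum.inl a) = Fin.castLE hi a
    apply Fin.ext
    simp [finSumFinEquiv_apply_left, Fin.coe_castAdd]
  have hσsymm2 : ∀ b : Fin j, σ.symm (Sum.inr b) = (⟨i + (b : ℕ), by omega⟩ : Fin p) := by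
    intro b
    show (finSumFinEquiv.trans (finCongr h2)) (Sum.inr b) = _
    apply Fin.ext
    simp [finSumFinEquiv_apply_right, Fin.coe_natAdd]
  set F : Fin p → Fin p := fun c => Sum.elim f g (σ c) with hFdef
  have hFinj : Function.Injective F := by
    intro c c' hcc
    refine σ.injective ?_
    have hcc' : Sum.elim f g (σ c) = Sum.elim f g (σ c') := hcc
    rcases hσc : σ c with a | b <;> rcases hσc' : σ c' with a' | b' <;>
        rw [hσc, hσc'] at hcc' <;> simp only [Sum.elim_inl, Sum.elim_inr] at hcc'
    · exact congrArg Sum.inl (hf hcc')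
    · exact absurd hcc' (hdisj _ _)
    · exact absurd hcc'.symm (hdisj _ _)
    · exact congrArg Sum.inr (hg hcc')
  have hFbij : Function.Bijective F := Finite.injective_iff_bijective.mp hFinj
  set cperm : Equiv.Perm (Fin p) := Equiv.ofBijective F hFbij with hcpermdef
  set π : Equiv.Perm (Fin p) := cperm⁻¹ with hπdef
  have hcperm_apply : ∀ c, cperm c = F c := fun c => rfl
  have hπF : ∀ c, π (F c) = c := by
    intro c
    rw [hπdef, ← hcperm_apply]
    exact Equiv.symm_apply_apply cperm c
  have hπf : ∀ a, π (f a) = Fin.castLE hi a := by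
    intro a
    have : f a = F (σ.symm (Sum.inl a)) := by
      rw [hFdef]; dsimp only; rw [Equiv.apply_symm_apply]; rfl
    rw [this, hπF, hσsymm1]
  have hπg : ∀ b, π (g b) = (⟨i + (b : ℕ), by omega⟩ : Fin p) := by
    intro b
    have : g b = F (σ.symm (Sum.inr b)) := by
      rw [hFdef]; dsimp only; rw [Equiv.apply_symm_apply]; rfl
    rw [this, hπF, hσsymm2]
  set ε : ℝ := ((Equiv.Perm.sign π : ℤ) : ℝ) with hεdef
  have hε : ε = 1 ∨ ε = -1 := by
    rcases Int.units_eq_one_or (Equiv.Perm.sign π) with h | h <;> rw [hεdef, h] <;> norm_num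
  set t0 : Fin p := ⟨0, hp⟩ with ht0
  set d : Fin p → ℝ := fun r => if r = t0 then ε else 1 with hdd
  have hd : ∀ r, d r = 1 ∨ d r = -1 := by
    intro r; rw [hdd]; dsimp only; split_ifs
    · exact hε
    · left; rfl
  have hprod : ∏ r, d r = ε := by
    rw [hdd]; dsimp only
    rw [Finset.prod_ite_eq' Finset.univ t0 (fun _ => ε)]; simp
  have hdet : (∏ r, d r) * ((Equiv.Perm.sign π : ℤ) : ℝ) = 1 := by
    rw [hprod, ← hεdef]; rcases hε with h | h <;> rw [h] <;> norm_num
  have hstar := star_lemma φ hinv π d hd hdet f g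
  -- the product of the two sign products is ε
  have hp12 : (∏ a, d (π (f a))) * (∏ b, d (π (g b))) = ε := by
    have hsum := Fintype.prod_sum_type (fun x : Fin i ⊕ Fin j => d (σ.symm x))
    simp only [hσsymm1, hσsymm2] at hsum
    rw [Equiv.prod_comp σ.symm d, hprod] at hsum
    simp only [hπf, hπg]
    exact hsum.symm
  have htup1 : (fun a => B p (π (f a))) = (fun a => B p (Fin.castLE hi a)) :=
    funext fun a => by rw [hπf]
  have htup2 : (fun b => B p (π (g b)))
      = (fun b : Fin j => B p (⟨i + (b : ℕ), by omega⟩ : Fin p)) :=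
    funext fun b => by rw [hπg]
  rw [htup1, htup2, hp12] at hstar
  -- compute detSplit on the basis vectors
  have hdetval : detSplit h2 (fun a => B p (f a)) (fun b => B p (g b)) = ε := by
    rw [detSplit_apply]
    have hmat : (Matrix.of fun (r : Fin p) (c : Fin p) =>
        Sum.elim (fun a => B p (f a)) (fun b => B p (g b))
          ((finSumFinEquiv.trans (finCongr h2)).symm c) r)
        = Equiv.Perm.permMatrix ℝ π := by
      ext r c
      rw [detSplit_basis_entry h2 f g r c]
      simp only [Equiv.Perm.permMatrix, PEquiv.toMatrix_apply, Equiv.toPEquiv_apply,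
        Option.mem_def, Option.some.injEq]
      have hiff : (r = Sum.elim f g ((finSumFinEquiv.trans (finCongr h2)).symm c))
          ↔ (π r = c) := by
        rw [show Sum.elim f g ((finSumFinEquiv.trans (finCongr h2)).symm c) = F c from rfl]
        constructor
        · intro h; rw [h, hπF]
        · intro h; rw [← h]
          have : F (π r) = cperm (π r) := rfl
          rw [this, hπdef]; exact (Equiv.apply_symm_apply cperm r).symm
      rw [if_congr hiff rfl rfl]
    rw [hmat, Matrix.det_permutation, hεdef]
  rw [hdetval, hstar]

end CaseC
section Assembly

variable {p i j : ℕ}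

lemma trichotomy (f : Fin i → Fin p) (g : Fin j → Fin p) :
    (Set.range f = Set.range g) ∨
    ((∀ a b, f a ≠ g b) ∧ ∀ x, x ∈ Set.range f ∨ x ∈ Set.range g) ∨
    (∃ k l : Fin p, (k ∈ Set.range f ↔ k ∈ Set.range g) ∧
      ¬(l ∈ Set.range f ↔ l ∈ Set.range g)) := by
  classical
  by_cases h1 : ∀ x : Fin p, (x ∈ Set.range f ↔ x ∈ Set.range g)
  · exact Or.inl (Set.ext h1)
  · push_neg at h1
    obtain ⟨l, hl⟩ := h1
    by_cases h2 : ∀ x : Fin p, ¬(x ∈ Set.range f ↔ x ∈ Set.range g)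
    · refine Or.inr (Or.inl ⟨?_, ?_⟩)
      · intro a b hc
        exact (h2 (f a)) ⟨fun _ => ⟨b, hc.symm⟩, fun _ => ⟨a, rfl⟩⟩
      · intro x
        by_contra hx
        rw [not_or] at hx
        exact (h2 x) ⟨fun h => absurd h hx.1, fun h => absurd h hx.2⟩
    · push_neg at h2
      obtain ⟨k, hk⟩ := h2
      refine Or.inr (Or.inr ⟨k, l, ?_, ?_⟩)
      · tauto
      · tauto

lemma range_eq_card (f : Fin i → Fin p) (g : Fin j → Fin p) (hf : Function.Injective f)
    (hg : Function.Injective g) (hreq : Set.range f = Set.range g) : i = j := by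
  have := Fintype.card_congr ((Equiv.ofInjective f hf).trans
    ((Equiv.setCongr hreq).trans (Equiv.ofInjective g hg).symm))
  simpa using this

lemma cover_card (f : Fin i → Fin p) (g : Fin j → Fin p) (hf : Function.Injective f)
    (hg : Function.Injective g) (hdisj : ∀ a b, f a ≠ g b)
    (hcov : ∀ x, x ∈ Set.range f ∨ x ∈ Set.range g) : i + j = p := by
  have hbij : Function.Bijective (Sum.elim f g) := by
    constructor
    · intro x y hxy
      rcases x with a | b <;> rcases y with a' | b' <;>
        simp only [Sum.elim_inl, Sum.elim_inr] at hxy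
      · rw [hf hxy]
      · exact absurd hxy (hdisj _ _)
      · exact absurd hxy.symm (hdisj _ _)
      · rw [hg hxy]
    · intro x
      rcases hcov x with ⟨a, ha⟩ | ⟨b, hb⟩
      · exact ⟨Sum.inl a, ha⟩
      · exact ⟨Sum.inr b, hb⟩
  have := Fintype.card_of_bijective hbij
  simpa using this

lemma sigma_eval (h2 : i + j = p) (c : Fin p) :
    (finSumFinEquiv.trans (finCongr h2)).symm c
      = if hc : (c : ℕ) < i then Sum.inl ⟨(c : ℕ), hc⟩
        else Sum.inr ⟨(c : ℕ) - i, by omega⟩ := by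
  rw [Equiv.symm_apply_eq]
  by_cases hc : (c : ℕ) < i
  · rw [dif_pos hc]
    apply Fin.ext
    show (c : ℕ) = ((finCongr h2 (finSumFinEquiv (Sum.inl ⟨(c : ℕ), hc⟩))) : ℕ)
    rw [finSumFinEquiv_apply_left, finCongr_apply_coe, Fin.coe_castAdd]
  · rw [dif_neg hc]
    apply Fin.ext
    show (c : ℕ) = ((finCongr h2 (finSumFinEquiv (Sum.inr ⟨(c : ℕ) - i, by omega⟩))) : ℕ)
    rw [finSumFinEquiv_apply_right, finCongr_apply_coe, Fin.coe_natAdd]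
    exact (by omega : (c : ℕ) = i + ((c : ℕ) - i))

lemma detSplit_eq (h2 : i + j = p) (v : Fin i → EuclideanSpace ℝ (Fin p))
    (w : Fin j → EuclideanSpace ℝ (Fin p)) :
    detSplit h2 v w = Matrix.det (Matrix.of fun (r c : Fin p) =>
      if hc : (c : ℕ) < i then v ⟨(c : ℕ), hc⟩ r else w ⟨(c : ℕ) - i, by omega⟩ r) := by
  rw [detSplit_apply]
  congr 1
  ext r c
  rw [Matrix.of_apply, Matrix.of_apply, sigma_eval h2 c]
  by_cases hc : (c : ℕ) < i
  · rw [dif_pos hc, dif_pos hc]; rfl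
  · rw [dif_neg hc, dif_neg hc]; rfl

end Assembly

end

end SOInvAux

open SOInvAux

/-- Classification of `SO(p)`-invariant elements of `Λ^i (ℝ^p)^* ⊗ Λ^j (ℝ^p)^*`: every
real-valued map on `(ℝ^p)^i × (ℝ^p)^j` that is multilinear, alternating in the first `i`
and in the last `j` arguments, and invariant under the diagonal action of `SO(p)` is a
linear combination of the Gram determinant `det (⟪v_a, w_b⟫)` (present only if `i = j`)
and the `p × p` determinant `det (v_1, …, v_i, w_1, …, w_j)` (present only if `i + j = p`).
In particular, if `i ≠ j` and `i + j ≠ p`, the map vanishes. -/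
theorem so_invariant_bialternating_forms (p : ℕ) (hp : 1 ≤ p)
    (i j : ℕ) (hi : i ≤ p) (hj : j ≤ p)
    (φ : (EuclideanSpace ℝ (Fin p)) [⋀^Fin i]→ₗ[ℝ]
          ((EuclideanSpace ℝ (Fin p)) [⋀^Fin j]→ₗ[ℝ] ℝ))
    (hinv : ∀ g : EuclideanSpace ℝ (Fin p) ≃ₗᵢ[ℝ] EuclideanSpace ℝ (Fin p),
      LinearMap.det (g.toLinearEquiv :
        EuclideanSpace ℝ (Fin p) →ₗ[ℝ] EuclideanSpace ℝ (Fin p)) = 1 →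
      ∀ (v : Fin i → EuclideanSpace ℝ (Fin p)) (w : Fin j → EuclideanSpace ℝ (Fin p)),
        φ (fun a => g (v a)) (fun b => g (w b)) = φ v w) :
    ∃ c₁ c₂ : ℝ,
      ∀ (v : Fin i → EuclideanSpace ℝ (Fin p)) (w : Fin j → EuclideanSpace ℝ (Fin p)),
        φ v w =
          c₁ * (if h : i = j then
              Matrix.det (Matrix.of fun a b =>
                (inner ℝ (v a) (w (Fin.cast h b)) : ℝ)) else 0) +
          c₂ * (if h : i + j = p then
              Matrix.det (Matrix.of fun (r : Fin p) (c : Fin p) =>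
                if hc : (c : ℕ) < i then v ⟨(c : ℕ), hc⟩ r
                else w ⟨(c : ℕ) - i, by have := c.isLt; omega⟩ r) else 0) := by
  classical
  by_cases hij : i = j
  · subst hij
    by_cases h2 : i + i = p
    · -- both the Gram and the determinant terms are present
      set c₁ : ℝ := φ (fun a => B p (Fin.castLE hi a)) (fun b => B p (Fin.castLE hi b))
        with hc₁
      set c₂ : ℝ := φ (fun a => B p (Fin.castLE hi a))
        (fun b : Fin i => B p (⟨i + (b : ℕ), by omega⟩ : Fin p)) with hc₂
      refine ⟨c₁, c₂, ?_⟩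
      have hφΨ : φ = c₁ • SOInvAux.gram + c₂ • detSplit h2 := by
        refine Module.Basis.ext_alternating (B p) (fun f hf => ?_)
        refine Module.Basis.ext_alternating (B p) (fun g hg => ?_)
        have hRHS : ((c₁ • SOInvAux.gram + c₂ • detSplit h2 :
            (EuclideanSpace ℝ (Fin p)) [⋀^Fin i]→ₗ[ℝ]
              ((EuclideanSpace ℝ (Fin p)) [⋀^Fin i]→ₗ[ℝ] ℝ)))
            (fun a => B p (f a)) (fun b => B p (g b))
            = gram (fun a => B p (f a)) (fun b => B p (g b)) * c₁
              + detSplit h2 (fun a => B p (f a)) (fun b => B p (g b)) * c₂ := by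
          simp only [AlternatingMap.add_apply, AlternatingMap.smul_apply, smul_eq_mul]
          ring
        rw [hRHS]
        have hpos : 0 < i := by omega
        rcases trichotomy f g with hreq | ⟨hdisj, hcov⟩ | ⟨k, l, hk, hl⟩
        · rw [caseB hp hi φ hinv f g hf hg hreq (fun a => Fin.castLE hi a) (fun a => rfl)]
          have hfb : f ⟨0, hpos⟩ ∈ Set.range g := by
            rw [← hreq]; exact ⟨⟨0, hpos⟩, rfl⟩
          obtain ⟨b0, hb0⟩ := hfb
          rw [detSplit_basis_zero h2 f g (Or.inr ⟨⟨0, hpos⟩, b0, hb0.symm⟩)]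
          ring
        · rw [caseC hp h2 φ hinv f g hf hg hdisj (fun a => Fin.castLE hi a) (fun a => rfl)
            (fun b : Fin i => (⟨i + (b : ℕ), by omega⟩ : Fin p)) (fun b => rfl)]
          have hgb : g ⟨0, hpos⟩ ∉ Set.range f := by
            rintro ⟨a, ha⟩; exact hdisj a ⟨0, hpos⟩ ha
          rw [gram_basis_zero f g (Or.inl ⟨⟨0, hpos⟩, hgb⟩)]
          ring
        · rw [caseA φ hinv f g hf hg k l hk hl]
          have hz1 : gram (fun a => B p (f a)) (fun b => B p (g b)) = 0 := by
            rcases Classical.em (l ∈ Set.range f) with hlf | hlf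
            · have hlg : l ∉ Set.range g := fun h => hl ⟨fun _ => h, fun _ => hlf⟩
              obtain ⟨a, ha⟩ := hlf
              exact gram_basis_zero f g (Or.inr ⟨a, ha.symm ▸ hlg⟩)
            · have hlg : l ∈ Set.range g := by tauto
              obtain ⟨b, hb⟩ := hlg
              exact gram_basis_zero f g (Or.inl ⟨b, hb.symm ▸ hlf⟩)
          have hz2 : detSplit h2 (fun a => B p (f a)) (fun b => B p (g b)) = 0 := by
            rcases Classical.em (k ∈ Set.range f) with hkf | hkf
            · obtain ⟨a, ha⟩ := hkf
              obtain ⟨b, hb⟩ := hk.mp ⟨a, ha⟩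
              exact detSplit_basis_zero h2 f g (Or.inr ⟨a, b, by rw [ha, hb]⟩)
            · have hkg : k ∉ Set.range g := fun h => hkf (hk.mpr h)
              exact detSplit_basis_zero h2 f g (Or.inl ⟨k, hkf, hkg⟩)
          rw [hz1, hz2]; ring
      intro v w
      rw [dif_pos (rfl : i = i), dif_pos h2, hφΨ]
      simp only [AlternatingMap.add_apply, AlternatingMap.smul_apply, smul_eq_mul]
      rw [gram_apply, detSplit_eq h2]
      rfl
    · -- only the Gram term is present
      set c₁ : ℝ := φ (fun a => B p (Fin.castLE hi a)) (fun b => B p (Fin.castLE hi b))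
        with hc₁
      refine ⟨c₁, 0, ?_⟩
      have hφΨ : φ = c₁ • SOInvAux.gram := by
        refine Module.Basis.ext_alternating (B p) (fun f hf => ?_)
        refine Module.Basis.ext_alternating (B p) (fun g hg => ?_)
        have hRHS : ((c₁ • SOInvAux.gram : (EuclideanSpace ℝ (Fin p)) [⋀^Fin i]→ₗ[ℝ]
              ((EuclideanSpace ℝ (Fin p)) [⋀^Fin i]→ₗ[ℝ] ℝ)))
            (fun a => B p (f a)) (fun b => B p (g b))
            = gram (fun a => B p (f a)) (fun b => B p (g b)) * c₁ := by
          simp only [AlternatingMap.smul_apply, smul_eq_mul]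
          ring
        rw [hRHS]
        rcases trichotomy f g with hreq | ⟨hdisj, hcov⟩ | ⟨k, l, hk, hl⟩
        · rw [caseB hp hi φ hinv f g hf hg hreq (fun a => Fin.castLE hi a) (fun a => rfl)]
        · exact absurd (cover_card f g hf hg hdisj hcov) h2
        · rw [caseA φ hinv f g hf hg k l hk hl]
          have hz1 : gram (fun a => B p (f a)) (fun b => B p (g b)) = 0 := by
            rcases Classical.em (l ∈ Set.range f) with hlf | hlf
            · have hlg : l ∉ Set.range g := fun h => hl ⟨fun _ => h, fun _ => hlf⟩
              obtain ⟨a, ha⟩ := hlf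
              exact gram_basis_zero f g (Or.inr ⟨a, ha.symm ▸ hlg⟩)
            · have hlg : l ∈ Set.range g := by tauto
              obtain ⟨b, hb⟩ := hlg
              exact gram_basis_zero f g (Or.inl ⟨b, hb.symm ▸ hlf⟩)
          rw [hz1]; ring
      intro v w
      rw [dif_pos (rfl : i = i), dif_neg h2, hφΨ]
      simp only [AlternatingMap.smul_apply, smul_eq_mul, mul_zero, add_zero, zero_mul]
      rw [gram_apply]
      rfl
  · by_cases h2 : i + j = p
    · -- only the determinant term is present
      set c₂ : ℝ := φ (fun a => B p (Fin.castLE hi a))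
        (fun b : Fin j => B p (⟨i + (b : ℕ), by omega⟩ : Fin p)) with hc₂
      refine ⟨0, c₂, ?_⟩
      have hφΨ : φ = c₂ • detSplit h2 := by
        refine Module.Basis.ext_alternating (B p) (fun f hf => ?_)
        refine Module.Basis.ext_alternating (B p) (fun g hg => ?_)
        have hRHS : ((c₂ • detSplit h2 : (EuclideanSpace ℝ (Fin p)) [⋀^Fin i]→ₗ[ℝ]
              ((EuclideanSpace ℝ (Fin p)) [⋀^Fin j]→ₗ[ℝ] ℝ)))
            (fun a => B p (f a)) (fun b => B p (g b))
            = detSplit h2 (fun a => B p (f a)) (fun b => B p (g b)) * c₂ := by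
          simp only [AlternatingMap.smul_apply, smul_eq_mul]
          ring
        rw [hRHS]
        rcases trichotomy f g with hreq | ⟨hdisj, hcov⟩ | ⟨k, l, hk, hl⟩
        · exact absurd (range_eq_card f g hf hg hreq) hij
        · rw [caseC hp h2 φ hinv f g hf hg hdisj (fun a => Fin.castLE hi a) (fun a => rfl)
            (fun b : Fin j => (⟨i + (b : ℕ), by omega⟩ : Fin p)) (fun b => rfl)]
        · rw [caseA φ hinv f g hf hg k l hk hl]
          have hz2 : detSplit h2 (fun a => B p (f a)) (fun b => B p (g b)) = 0 := by
            rcases Classical.em (k ∈ Set.range f) with hkf | hkf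
            · obtain ⟨a, ha⟩ := hkf
              obtain ⟨b, hb⟩ := hk.mp ⟨a, ha⟩
              exact detSplit_basis_zero h2 f g (Or.inr ⟨a, b, by rw [ha, hb]⟩)
            · have hkg : k ∉ Set.range g := fun h => hkf (hk.mpr h)
              exact detSplit_basis_zero h2 f g (Or.inl ⟨k, hkf, hkg⟩)
          rw [hz2]; ring
      intro v w
      rw [dif_neg hij, dif_pos h2, hφΨ]
      simp only [AlternatingMap.smul_apply, smul_eq_mul, mul_zero, zero_add, zero_mul]
      rw [detSplit_eq h2]
    · -- the form vanishes
      refine ⟨0, 0, ?_⟩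
      have hφΨ : φ = 0 := by
        refine Module.Basis.ext_alternating (B p) (fun f hf => ?_)
        refine Module.Basis.ext_alternating (B p) (fun g hg => ?_)
        have hRHS : (0 : (EuclideanSpace ℝ (Fin p)) [⋀^Fin i]→ₗ[ℝ]
            ((EuclideanSpace ℝ (Fin p)) [⋀^Fin j]→ₗ[ℝ] ℝ))
            (fun a => B p (f a)) (fun b => B p (g b)) = 0 := by
          simp
        rw [hRHS]
        rcases trichotomy f g with hreq | ⟨hdisj, hcov⟩ | ⟨k, l, hk, hl⟩
        · exact absurd (range_eq_card f g hf hg hreq) hij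
        · exact absurd (cover_card f g hf hg hdisj hcov) h2
        · exact caseA φ hinv f g hf hg k l hk hl
      intro v w
      rw [hφΨ, dif_neg hij, dif_neg h2]
      simp
end
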